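/- (Barlow–Ding–Nachmias–Peres lemma) Let A be a finite subset of M, let z ∈ A, and let k be a positive integer. Then E_z T_cov(A) ≤ E_z T^k(z) / P_z( T_cov(A) ≤ T^k(z) ) = k / ( π(z) · P_z( T_cov(A) ≤ T^k(z) ) ). -/

import Mathlib

open MeasureTheory ENNReal NNReal

namespace CoverTime

noncomputable section

/-- A (time-homogeneous) Markov chain on a state space `M`, described by the family of
laws `P x` of the trajectory `(X_n)_{n ≥ 0}` started at `x`, on the path space `ℕ → M`,
together with its transition kernel `K`. -/
structure Chain (M : Type*) [MeasurableSpace M] where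
  P : M → Measure (ℕ → M)
  prob : ∀ x, IsProbabilityMeasure (P x)
  K : M → M → ℝ≥0∞
  K_row : ∀ x, ∑' y, K x y = 1
  start : ∀ x, P x {ω | ω 0 = x} = 1
  markov : ∀ (x : M) (path : ℕ → M) (n : ℕ),
    P x {ω | ∀ i ≤ n + 1, ω i = path i}
      = P x {ω | ∀ i ≤ n, ω i = path i} * K (path n) (path (n + 1))

variable {M : Type*}

/-- Hitting time `T(A) = inf {n ≥ 0 : X_n ∈ A}` of a set `A`, with value `∞` if `A` is
never hit. -/
def hitTime (A : Set M) (ω : ℕ → M) : ℝ≥0∞ :=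
  ⨅ n ∈ {n : ℕ | ω n ∈ A}, (n : ℝ≥0∞)

/-- The `k`-th return time `T^k(x)`: `T^0(x) = 0` and
`T^k(x) = inf {n ≥ T^{k-1}(x) + 1 : X_n = x}`. -/
def retTime (x : M) : ℕ → (ℕ → M) → ℝ≥0∞
  | 0 => fun _ => 0
  | k + 1 => fun ω => ⨅ n ∈ {n : ℕ | retTime x k ω < (n : ℝ≥0∞) ∧ ω n = x}, (n : ℝ≥0∞)

/-- Number of visits to `y` (strictly) before time `t`, i.e. `N_t(y)`. -/
def visits (y : M) (t : ℝ≥0∞) (ω : ℕ → M) : ℝ≥0∞ :=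
  ∑' n : ℕ, Set.indicator {n : ℕ | (n : ℝ≥0∞) < t ∧ ω n = y} (fun _ => (1 : ℝ≥0∞)) n

variable [MeasurableSpace M]

/-- Expectation `E_x f` of a nonnegative path functional under `P_x`. -/
def E (c : Chain M) (x : M) (f : (ℕ → M) → ℝ≥0∞) : ℝ≥0∞ :=
  ∫⁻ ω, f ω ∂(c.P x)

/-- The expected hitting time `E_x T(y)`. -/
def eHit (c : Chain M) (x y : M) : ℝ≥0∞ := E c x (hitTime {y})

/-- The commute distance `d(x,y) = E_x T(y) + E_y T(x)`. -/
def commuteDist (c : Chain M) (x y : M) : ℝ≥0∞ := eHit c x y + eHit c y x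

/-- `T_cov(A) = sup_{x ∈ A} T(x)`, the first time every point of `A` has been visited. -/
def coverTime (A : Set M) (ω : ℕ → M) : ℝ≥0∞ := ⨆ x ∈ A, hitTime {x} ω

/-- The cover time `cov(A) = sup_{x ∈ A} E_x T_cov(A)`. -/
def cov (c : Chain M) (A : Set M) : ℝ≥0∞ := ⨆ x ∈ A, E c x (coverTime A)

/-- `cov_-(A) = min_{x ∈ A} E_x T_cov(A)`. -/
def covMinus (c : Chain M) (A : Set M) : ℝ≥0∞ := ⨅ x ∈ A, E c x (coverTime A)

/-- Irreducibility of the chain. -/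
def Irreducible (c : Chain M) : Prop := ∀ x y : M, ∃ n : ℕ, 0 < c.P x {ω | ω n = y}

/-- Positive recurrence: every state has finite expected return time. -/
def PositiveRecurrent (c : Chain M) : Prop := ∀ x : M, E c x (retTime x 1) < ∞

/-- `π` is an invariant probability measure for the chain. -/
def Invariant (c : Chain M) (π : M → ℝ≥0∞) : Prop :=
  (∑' x, π x = 1) ∧ ∀ y, ∑' x, π x * c.K x y = π y

/-- Reversibility with respect to `π`: `π(x) P(x,y) = π(y) P(y,x)`. -/
def Reversible (c : Chain M) (π : M → ℝ≥0∞) : Prop :=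
  ∀ x y, π x * c.K x y = π y * c.K y x

/-- Diameter of a set with respect to an `ℝ≥0∞`-valued distance. -/
def setDiam (d : M → M → ℝ≥0∞) (B : Set M) : ℝ≥0∞ := ⨆ x ∈ B, ⨆ y ∈ B, d x y

/-- The sequence `N_0 = 1`, `N_n = 2^(2^n)` for `n ≥ 1`. -/
def Nseq : ℕ → ℕ
  | 0 => 1
  | n + 1 => 2 ^ 2 ^ (n + 1)

/-- An admissible sequence of partitions of `A`: `𝒜_{n+1}` refines `𝒜_n` and
`|𝒜_n| ≤ N_n` for every `n`.  The partition `𝒜_n` is encoded by the map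
`cell n` sending `x ∈ A` to the element `A_n(x)` of `𝒜_n` containing it. -/
structure AdmissibleSeq {M : Type*} (A : Set M) where
  cell : ℕ → M → Set M
  self_mem : ∀ n, ∀ x ∈ A, x ∈ cell n x
  cell_subset : ∀ n, ∀ x ∈ A, cell n x ⊆ A
  compatible : ∀ n, ∀ x ∈ A, ∀ y ∈ A, cell n x = cell n y ∨ Disjoint (cell n x) (cell n y)
  refines : ∀ n, ∀ x ∈ A, cell (n + 1) x ⊆ cell n x
  finite : ∀ n, {B : Set M | ∃ x ∈ A, B = cell n x}.Finite
  card_le : ∀ n, {B : Set M | ∃ x ∈ A, B = cell n x}.ncard ≤ Nseq n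

/-- Talagrand's functional `γ₂(A, d) = inf sup_x Σ_n 2^{n/2} Δ(A_n(x), d)`, the infimum
running over admissible sequences of partitions of `A`. -/
def gamma2 {M : Type*} (d : M → M → ℝ≥0∞) (A : Set M) : ℝ≥0∞ :=
  ⨅ 𝒜 : AdmissibleSeq A, ⨆ x ∈ A,
    ∑' n : ℕ, (2 : ℝ≥0∞) ^ ((n : ℝ) / 2) * setDiam d (𝒜.cell n x)

/-- Talagrand's functional `γ₁(A, d) = inf sup_x Σ_n 2^n Δ(A_n(x), d)`. -/
def gamma1 {M : Type*} (d : M → M → ℝ≥0∞) (A : Set M) : ℝ≥0∞ :=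
  ⨅ 𝒜 : AdmissibleSeq A, ⨆ x ∈ A,
    ∑' n : ℕ, (2 : ℝ≥0∞) ^ n * setDiam d (𝒜.cell n x)

/-- Talagrand's growth condition for a set functional `F`, with parameters `r` and `τ`. -/
def GrowthCondition {M : Type*} (d : M → M → ℝ≥0∞) (F : Set M → ℝ≥0∞)
    (r : ℝ≥0∞) (τ : ℕ) : Prop :=
  ∀ (n : ℕ) (a : ℝ≥0∞), 0 < a →
    ∀ H : Fin (Nseq (n + τ)) → Set M,
      (∀ i, (H i).Nonempty) →
      setDiam d (⋃ i, H i) ≤ r * a →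
      (∀ i j, i ≠ j → ∀ x ∈ H i, ∀ y ∈ H j, a ≤ d x y) →
      (∀ i, setDiam d (H i) ≤ a / r) →
      a * 2 ^ n + ⨅ i, F (H i) ≤ F (⋃ i, H i)


section Aux

set_option linter.unusedSectionVars false

variable {M : Type*}

/-! ### infimum helpers -/


def nInf (p : ℕ → Prop) : ℝ≥0∞ := ⨅ n ∈ {n | p n}, (n : ℝ≥0∞)

lemma nInf_le {p : ℕ → Prop} {n : ℕ} (hn : p n) : nInf p ≤ n := iInf₂_le n hn

lemma le_nInf {p : ℕ → Prop} {a : ℝ≥0∞} (h : ∀ n, p n → a ≤ n) : a ≤ nInf p := le_iInf₂ h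

lemma nInf_eq_top {p : ℕ → Prop} (h : ∀ n, ¬ p n) : nInf p = ⊤ :=
  le_antisymm le_top (le_nInf fun n hn => absurd hn (h n))

lemma nInf_le_coe_iff {p : ℕ → Prop} {n : ℕ} : nInf p ≤ n ↔ ∃ m, m ≤ n ∧ p m := by
  constructor
  · intro h
    by_contra hc
    push_neg at hc
    have h2 : ((n+1 : ℕ) : ℝ≥0∞) ≤ nInf p := by
      refine le_nInf fun m hm => ?_
      have : n + 1 ≤ m := by
        by_contra hlt
        exact hc m (by omega) hm
      exact_mod_cast this
    have h3 := h2.trans h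
    have h4 : n + 1 ≤ n := by exact_mod_cast h3
    omega
  · rintro ⟨m, hm, hpm⟩
    exact (nInf_le hpm).trans (by exact_mod_cast hm)

lemma coe_lt_nInf_iff {p : ℕ → Prop} {n : ℕ} : (n : ℝ≥0∞) < nInf p ↔ ∀ m ≤ n, ¬ p m := by
  rw [lt_iff_not_ge]
  constructor
  · intro h m hm hpm
    exact h ((nInf_le hpm).trans (by exact_mod_cast hm))
  · intro h hle
    obtain ⟨m, hm, hpm⟩ := nInf_le_coe_iff.mp hle
    exact h m hm hpm

lemma nInf_eq_coe_iff {p : ℕ → Prop} {n : ℕ} : nInf p = n ↔ p n ∧ ∀ m < n, ¬ p m := by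
  constructor
  · intro h
    have hle : nInf p ≤ n := le_of_eq h
    obtain ⟨m, hmn, hpm⟩ := nInf_le_coe_iff.mp hle
    have hmin : ∀ m' < n, ¬ p m' := by
      intro m' hm' hpm'
      have := nInf_le (p := p) hpm'
      rw [h] at this
      have : n ≤ m' := by exact_mod_cast this
      omega
    have : m = n := by
      rcases Nat.lt_or_ge m n with h1 | h1
      · exact absurd hpm (hmin m h1)
      · omega
    exact ⟨this ▸ hpm, hmin⟩
  · rintro ⟨hpn, hmin⟩
    refine le_antisymm (nInf_le hpn) (le_nInf fun m hpm => ?_)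
    have : n ≤ m := by
      by_contra hlt
      exact hmin m (by omega) hpm
    exact_mod_cast this

lemma nInf_cases (p : ℕ → Prop) :
    (∃ n : ℕ, nInf p = (n : ℝ≥0∞) ∧ p n ∧ ∀ m < n, ¬ p m) ∨ (nInf p = ⊤ ∧ ∀ n, ¬ p n) := by
  by_cases h : ∃ n, p n
  · classical
    left
    obtain ⟨n, hn⟩ := h
    have : nInf p ≤ n := nInf_le hn
    obtain ⟨m, _, hpm⟩ := nInf_le_coe_iff.mp this
    -- take minimal
    obtain ⟨m0, hm0, hmin⟩ := Nat.lt_wfRel.wf.has_min {m | p m} ⟨m, hpm⟩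
    refine ⟨m0, ?_, hm0, fun m' hm' hpm' => hmin m' hpm' hm'⟩
    exact nInf_eq_coe_iff.mpr ⟨hm0, fun m' hm' hpm' => hmin m' hpm' hm'⟩
  · push_neg at h
    exact Or.inr ⟨nInf_eq_top h, h⟩

lemma nInf_congr {p q : ℕ → Prop} (h : ∀ n, p n ↔ q n) : nInf p = nInf q :=
  le_antisymm (le_nInf fun n hn => nInf_le ((h n).mpr hn))
    (le_nInf fun n hn => nInf_le ((h n).mp hn))

lemma nInf_eq_iInf (p : ℕ → Prop) [DecidablePred p] :
    nInf p = ⨅ n : ℕ, (if p n then (n : ℝ≥0∞) else ⊤) := by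
  refine le_antisymm (le_iInf fun n => ?_) (le_nInf fun n hn => ?_)
  · by_cases h : p n
    · simp only [h, if_true]; exact nInf_le h
    · simp [h]
  · refine (iInf_le _ n).trans ?_
    simp [hn]

lemma nInf_shift (n : ℕ) (p : ℕ → Prop) :
    nInf (fun m => n < m ∧ p m) = (n : ℝ≥0∞) + nInf (fun i => 0 < i ∧ p (n + i)) := by
  by_cases h : ∃ i, 0 < i ∧ p (n + i)
  · obtain ⟨j, hj, hmin⟩ := Nat.lt_wfRel.wf.has_min {i | 0 < i ∧ p (n + i)} h
    have h2 : nInf (fun i => 0 < i ∧ p (n + i)) = j :=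
      nInf_eq_coe_iff.mpr ⟨hj, fun m hm hpm => hmin m hpm hm⟩
    rw [h2]
    have h3 : nInf (fun m => n < m ∧ p m) = ((n + j : ℕ) : ℝ≥0∞) := by
      have hj1 : 0 < j := hj.1
      refine nInf_eq_coe_iff.mpr ⟨⟨by omega, hj.2⟩, ?_⟩
      rintro m hm ⟨hm1, hm2⟩
      have : m - n < j := by omega
      refine hmin (m - n) ⟨by omega, ?_⟩ this
      have : n + (m - n) = m := by omega
      rw [this]; exact hm2
    rw [h3]
    push_cast
    rfl
  · push_neg at h
    have h2 : nInf (fun i => 0 < i ∧ p (n + i)) = ⊤ :=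
      nInf_eq_top fun i hi => (h i hi.1) hi.2
    have h3 : nInf (fun m => n < m ∧ p m) = ⊤ := by
      refine nInf_eq_top ?_
      rintro m ⟨hm1, hm2⟩
      refine h (m - n) (by omega) ?_
      have : n + (m - n) = m := by omega
      rw [this]; exact hm2
    rw [h2, h3]
    simp

/-! ### hitTime / retTime basic facts -/

lemma hitTime_eq_nInf (x : M) (ω : ℕ → M) : hitTime {x} ω = nInf (fun n => ω n = x) := rfl

lemma retTime_succ_eq (z : M) (k : ℕ) (ω : ℕ → M) :
    retTime z (k + 1) ω = nInf (fun n => retTime z k ω < (n : ℝ≥0∞) ∧ ω n = z) := rfl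

lemma retTime_zero (z : M) (ω : ℕ → M) : retTime z 0 ω = 0 := rfl

lemma retTime_cases (z : M) (k : ℕ) (ω : ℕ → M) :
    (∃ n : ℕ, retTime z k ω = n) ∨ retTime z k ω = ⊤ := by
  cases k with
  | zero => exact Or.inl ⟨0, by simp [retTime_zero]⟩
  | succ k =>
    rw [retTime_succ_eq]
    rcases nInf_cases (fun n => retTime z k ω < (n : ℝ≥0∞) ∧ ω n = z) with ⟨n, hn, _⟩ | ⟨h, _⟩
    · exact Or.inl ⟨n, hn⟩
    · exact Or.inr h

lemma retTime_le_succ (z : M) (k : ℕ) (ω : ℕ → M) :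
    retTime z k ω ≤ retTime z (k + 1) ω := by
  rw [retTime_succ_eq]
  exact le_nInf fun n hn => le_of_lt hn.1

lemma coe_le_retTime (z : M) (k : ℕ) (ω : ℕ → M) : (k : ℝ≥0∞) ≤ retTime z k ω := by
  induction k with
  | zero => simp
  | succ k ih =>
    rw [retTime_succ_eq]
    refine le_nInf fun n hn => ?_
    have h1 : (k : ℝ≥0∞) < (n : ℝ≥0∞) := lt_of_le_of_lt ih hn.1
    have : k < n := by exact_mod_cast h1
    exact_mod_cast this

lemma one_le_retTime (z : M) {k : ℕ} (hk : 1 ≤ k) (ω : ℕ → M) :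
    (1 : ℝ≥0∞) ≤ retTime z k ω := by
  refine le_trans ?_ (coe_le_retTime z k ω)
  exact_mod_cast hk

lemma retTime_mono (z : M) {j k : ℕ} (h : j ≤ k) (ω : ℕ → M) :
    retTime z j ω ≤ retTime z k ω := by
  induction k with
  | zero => have : j = 0 := by omega
            subst this; exact le_refl _
  | succ k ih =>
    rcases Nat.lt_or_ge j (k+1) with h1 | h1
    · exact (ih (by omega)).trans (retTime_le_succ z k ω)
    · have : j = k + 1 := by omega
      subst this; exact le_refl _

lemma retTime_eq_coe {z : M} {k : ℕ} {ω : ℕ → M} {n : ℕ}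
    (h : retTime z (k+1) ω = (n : ℝ≥0∞)) :
    ω n = z ∧ retTime z k ω < (n : ℝ≥0∞) ∧
      ∀ m < n, ¬ (retTime z k ω < (m : ℝ≥0∞) ∧ ω m = z) := by
  rw [retTime_succ_eq] at h
  obtain ⟨⟨h1, h2⟩, h3⟩ := nInf_eq_coe_iff.mp h
  exact ⟨h2, h1, h3⟩

/-- shift by `n` -/
def shf (n : ℕ) (ω : ℕ → M) : ℕ → M := fun i => ω (n + i)

lemma shf_zero (ω : ℕ → M) : shf 0 ω = ω := by
  funext i; simp [shf]

lemma shf_shf (n m : ℕ) (ω : ℕ → M) : shf n (shf m ω) = shf (m + n) ω := by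
  funext i; simp [shf, Nat.add_assoc]

lemma measurable_shf [MeasurableSpace M] (n : ℕ) : Measurable (shf (M := M) n) :=
  measurable_pi_lambda _ fun i => measurable_pi_apply (n + i)

/-- the key pathwise regeneration identity for return times -/
lemma retTime_succ_shift {z : M} {j : ℕ} {ω : ℕ → M} {n : ℕ}
    (h : retTime z j ω = (n : ℝ≥0∞)) :
    retTime z (j + 1) ω = (n : ℝ≥0∞) + retTime z 1 (shf n ω) := by
  rw [retTime_succ_eq, h]
  have h1 : retTime z 1 (shf n ω) = nInf (fun i => 0 < i ∧ ω (n + i) = z) := by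
    rw [retTime_succ_eq]
    refine nInf_congr fun i => ?_
    rw [retTime_zero]
    constructor
    · rintro ⟨hi, he⟩
      exact ⟨by exact_mod_cast hi, he⟩
    · rintro ⟨hi, he⟩
      exact ⟨by exact_mod_cast hi, he⟩
  rw [h1]
  have h2 : nInf (fun m => ((n:ℝ≥0∞)) < (m:ℝ≥0∞) ∧ ω m = z) = nInf (fun m => n < m ∧ ω m = z) :=
    nInf_congr fun m => by
      constructor
      · rintro ⟨h1', h2'⟩; exact ⟨by exact_mod_cast h1', h2'⟩
      · rintro ⟨h1', h2'⟩; exact ⟨by exact_mod_cast h1', h2'⟩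
  rw [h2, nInf_shift]

/-- `retTime` is determined by the path up to its (finite) value. -/
lemma retTime_cyl {z : M} (j : ℕ) {n : ℕ} {ω ω' : ℕ → M}
    (hpre : ∀ i ≤ n, ω i = ω' i) (h : retTime z j ω = (n : ℝ≥0∞)) :
    retTime z j ω' = (n : ℝ≥0∞) := by
  induction j generalizing n with
  | zero =>
    rw [retTime_zero] at h ⊢
    have : n = 0 := by exact_mod_cast h.symm
    rw [this]; simp
  | succ j ih =>
    obtain ⟨hz, hlt, hmin⟩ := retTime_eq_coe h
    obtain ⟨m, hm⟩ | htop := retTime_cases z j ω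
    · have hmn : m < n := by
        rw [hm] at hlt; exact_mod_cast hlt
      have hm' : retTime z j ω' = (m : ℝ≥0∞) :=
        ih (fun i hi => hpre i (by omega)) hm
      rw [retTime_succ_eq, hm']
      refine nInf_eq_coe_iff.mpr ⟨⟨by exact_mod_cast hmn, by rw [← hpre n le_rfl]; exact hz⟩, ?_⟩
      rintro m' hm'n ⟨hlt', hz'⟩
      refine hmin m' hm'n ⟨by rw [hm]; exact hlt', ?_⟩
      rw [hpre m' (by omega)]; exact hz'
    · rw [htop] at hlt
      exact absurd hlt (by simp)


end Aux

section Boot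

set_option linter.unusedSectionVars false

variable {M : Type*} [MeasurableSpace M]

/-! ### Bootstrap -/



def rel (x y : M) : Prop := ∀ s : Set M, MeasurableSet s → (x ∈ s ↔ y ∈ s)

lemma rel_refl (x : M) : rel x x := fun _ _ => Iff.rfl

lemma rel_symm {x y : M} (h : rel x y) : rel y x := fun s hs => (h s hs).symm

lemma rel_trans {x y z : M} (h : rel x y) (h' : rel y z) : rel x z :=
  fun s hs => (h s hs).trans (h' s hs)

lemma atom_measurable [Countable M] (x : M) : MeasurableSet {y | rel x y} := by
  classical
  have hsep : ∀ b : {b : M // ¬ rel x b}, ∃ T : Set M, MeasurableSet T ∧ x ∈ T ∧ ↑b ∉ T := by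
    rintro ⟨b, hb⟩
    simp only [rel, not_forall] at hb
    obtain ⟨s, hs, hiff⟩ := hb
    by_cases hx : x ∈ s
    · exact ⟨s, hs, hx, fun hbs => hiff (iff_of_true hx hbs)⟩
    · exact ⟨sᶜ, hs.compl, hx, fun hbs => hiff (iff_of_false hx hbs)⟩
  choose T hTmeas hxT hbT using hsep
  have heq : {y | rel x y} = ⋂ b : {b : M // ¬ rel x b}, T b := by
    ext y
    simp only [Set.mem_setOf_eq, Set.mem_iInter]
    constructor
    · intro hy b
      exact (hy (T b) (hTmeas b)).mp (hxT b)
    · intro hy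
      by_contra hrel
      exact hbT ⟨y, hrel⟩ (hy ⟨y, hrel⟩)
  rw [heq]
  exact MeasurableSet.iInter fun b => hTmeas b

lemma invariant_preimage (ψ : ℕ → M → M)
    (hψ : ∀ i (s : Set M), MeasurableSet s → (ψ i) ⁻¹' s = s)
    {T : Set (ℕ → M)} (hT : MeasurableSet T) :
    (fun ω i => ψ i (ω i)) ⁻¹' T = T := by
  let m' : MeasurableSpace (ℕ → M) :=
    { MeasurableSet' := fun T => MeasurableSet T ∧ (fun ω i => ψ i (ω i)) ⁻¹' T = T
      measurableSet_empty := ⟨MeasurableSet.empty, by simp⟩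
      measurableSet_compl := fun s hs => ⟨hs.1.compl, by rw [Set.preimage_compl, hs.2]⟩
      measurableSet_iUnion := fun f hf =>
        ⟨MeasurableSet.iUnion fun i => (hf i).1, by
          rw [Set.preimage_iUnion]
          exact Set.iUnion_congr fun i => (hf i).2⟩ }
  have hle : (MeasurableSpace.pi : MeasurableSpace (ℕ → M)) ≤ m' := by
    refine iSup_le fun i => ?_
    intro t ht
    obtain ⟨s, hs, rfl⟩ := ht
    refine ⟨measurable_pi_apply i hs, ?_⟩
    ext ω
    simp only [Set.mem_preimage]
    exact Set.ext_iff.mp (hψ i s hs) (ω i)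
  exact (hle T hT).2

lemma swap_preimage [DecidableEq M] {a b : M} (h : rel a b) (s : Set M) (hs : MeasurableSet s) :
    (fun y => Equiv.swap a b y) ⁻¹' s = s := by
  ext y
  simp only [Set.mem_preimage]
  rcases eq_or_ne y a with rfl | hya
  · rw [Equiv.swap_apply_left]
    exact (h s hs).symm
  · rcases eq_or_ne y b with rfl | hyb
    · rw [Equiv.swap_apply_right]
      exact h s hs
    · rw [Equiv.swap_apply_of_ne_of_ne hya hyb]

lemma outer_le_of_maps {μ : Measure (ℕ → M)} {S1 S2 : Set (ℕ → M)}
    (h : ∀ ω ∈ S2, ∃ Φ : (ℕ → M) → (ℕ → M),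
      (∀ T : Set (ℕ → M), MeasurableSet T → Φ ⁻¹' T = T) ∧ Φ ω ∈ S1) :
    μ S2 ≤ μ S1 := by
  rw [measure_eq_iInf S1]
  refine le_iInf fun T => le_iInf fun hsub => le_iInf fun hT => ?_
  refine measure_mono fun ω hω => ?_
  obtain ⟨Φ, hΦ, hin⟩ := h ω hω
  have h2 : Φ ω ∈ T := hsub hin
  rw [← hΦ T hT]
  exact h2

variable [Countable M] (c : Chain M)

lemma set_zero_eq (x : M) : {ω : ℕ → M | ∀ i ≤ 0, ω i = x} = {ω | ω 0 = x} := by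
  ext ω
  simp only [Set.mem_setOf_eq, Nat.le_zero, forall_eq]

lemma cyl_one (x d : M) (q : ℕ → M) (hq0 : q 0 = x) (hq1 : q 1 = d) :
    c.P x {ω | ∀ i ≤ 1, ω i = q i} = c.K x d := by
  have hm := c.markov x q 0
  norm_num at hm
  rw [hm, hq0, hq1, c.start x, one_mul]

lemma classcyl_le (x w : M) :
    c.P x {ω | rel x (ω 0) ∧ rel w (ω 1)} ≤ c.K x w := by
  classical
  rw [← cyl_one c x w (fun i => if i = 0 then x else w) rfl (by norm_num)]
  refine outer_le_of_maps fun ω hω => ?_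
  obtain ⟨h0, h1⟩ := hω
  set ψ : ℕ → M → M := fun i y => if i = 0 then Equiv.swap (ω 0) x y
    else if i = 1 then Equiv.swap (ω 1) w y else y with hψdef
  have hψ : ∀ i (s : Set M), MeasurableSet s → (ψ i) ⁻¹' s = s := by
    intro i s hs
    rcases eq_or_ne i 0 with rfl | hi0
    · have : ψ 0 = fun y => Equiv.swap (ω 0) x y := by
        funext y; simp [hψdef]
      rw [this]
      exact swap_preimage (rel_symm h0) s hs
    · rcases eq_or_ne i 1 with rfl | hi1
      · have : ψ 1 = fun y => Equiv.swap (ω 1) w y := by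
          funext y; simp [hψdef]
        rw [this]
        exact swap_preimage (rel_symm h1) s hs
      · have : ψ i = fun y => y := by
          funext y; simp [hψdef, hi0, hi1]
        rw [this]
        rfl
  refine ⟨fun ω' i => ψ i (ω' i), fun T hT => invariant_preimage ψ hψ hT, ?_⟩
  intro i hi
  interval_cases i
  · simp [hψdef, Equiv.swap_apply_left]
  · simp [hψdef, Equiv.swap_apply_left]

lemma rel_start (x : M) : c.P x {ω | rel x (ω 0)} = 1 := by
  have := c.prob x
  refine le_antisymm prob_le_one ?_
  rw [← c.start x]
  refine measure_mono fun ω hω => ?_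
  simp only [Set.mem_setOf_eq] at hω ⊢
  rw [hω]
  exact rel_refl x

lemma not_rel_start (x : M) : c.P x {ω | ¬ rel x (ω 0)} = 0 := by
  have := c.prob x
  have hmeas : MeasurableSet {ω : ℕ → M | rel x (ω 0)} := by
    have hp : {ω : ℕ → M | rel x (ω 0)} = (fun ω : ℕ → M => ω 0) ⁻¹' {y | rel x y} := rfl
    rw [hp]
    exact measurable_pi_apply 0 (atom_measurable x)
  have h1 : {ω : ℕ → M | ¬ rel x (ω 0)} = {ω | rel x (ω 0)}ᶜ := rfl
  rw [h1, measure_compl hmeas (measure_ne_top _ _), rel_start c x, measure_univ]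
  simp

lemma three_le {f : M → ℝ≥0∞} {s : Set M} {a b : M}
    (ha : a ∉ s) (hb : b ∉ s) (hne : a ≠ b) :
    (∑' y : s, f y) + f a + f b ≤ ∑' y, f y := by
  classical
  have h1 : (∑' y : s, f y) = ∑' y, Set.indicator s f y := tsum_subtype s f
  have h2 : f a = ∑' y, Set.indicator {a} f y := by
    rw [← tsum_subtype ({a} : Set M) f, tsum_singleton]
  have h3 : f b = ∑' y, Set.indicator {b} f y := by
    rw [← tsum_subtype ({b} : Set M) f, tsum_singleton]
  rw [h1, h2, h3, ← ENNReal.tsum_add, ← ENNReal.tsum_add]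
  refine ENNReal.tsum_le_tsum fun y => ?_
  by_cases hy : y ∈ s
  · have hya : y ≠ a := fun h => ha (h ▸ hy)
    have hyb : y ≠ b := fun h => hb (h ▸ hy)
    simp [Set.indicator_of_mem hy, Set.indicator_of_notMem (s := ({a} : Set M)) hya,
      Set.indicator_of_notMem (s := ({b} : Set M)) hyb]
  · rcases eq_or_ne y a with rfl | hya
    · simp [Set.indicator_of_notMem hy, Set.indicator_of_mem (Set.mem_singleton y),
        Set.indicator_of_notMem (s := ({b} : Set M)) hne]
    · rcases eq_or_ne y b with rfl | hyb
      · simp [Set.indicator_of_notMem hy, Set.indicator_of_mem (Set.mem_singleton y),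
          Set.indicator_of_notMem (s := ({a} : Set M)) hya]
      · simp [Set.indicator_of_notMem hy,
          Set.indicator_of_notMem (s := ({a} : Set M)) hya,
          Set.indicator_of_notMem (s := ({b} : Set M)) hyb]

lemma K_vanish {a b : M} (hab : rel a b) (hne : a ≠ b) (x : M) : c.K x a = 0 := by
  classical
  set s : Set M := {y | ¬ rel a y} with hs_def
  -- covering estimate: 1 ≤ K x b + ∑' (y : s), K x y
  have hcover : (1 : ℝ≥0∞) ≤ c.K x b + ∑' y : s, c.K x y := by
    have hsub : (Set.univ : Set (ℕ → M)) ⊆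
        {ω | ¬ rel x (ω 0)} ∪ ({ω | rel x (ω 0) ∧ rel a (ω 1)} ∪
          ⋃ y : s, {ω | rel x (ω 0) ∧ ω 1 = (y : M)}) := by
      intro ω _
      by_cases h0 : rel x (ω 0)
      · by_cases h1 : rel a (ω 1)
        · exact Or.inr (Or.inl ⟨h0, h1⟩)
        · exact Or.inr (Or.inr (Set.mem_iUnion.mpr ⟨⟨ω 1, h1⟩, h0, rfl⟩))
      · exact Or.inl h0
    have := c.prob x
    have h1 : (1 : ℝ≥0∞) = c.P x Set.univ := (measure_univ).symm
    calc (1 : ℝ≥0∞) = c.P x Set.univ := h1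
      _ ≤ c.P x ({ω | ¬ rel x (ω 0)} ∪ ({ω | rel x (ω 0) ∧ rel a (ω 1)} ∪
          ⋃ y : s, {ω | rel x (ω 0) ∧ ω 1 = (y : M)})) := measure_mono hsub
      _ ≤ c.P x {ω | ¬ rel x (ω 0)} + (c.P x {ω | rel x (ω 0) ∧ rel a (ω 1)} +
          c.P x (⋃ y : s, {ω | rel x (ω 0) ∧ ω 1 = (y : M)})) :=
        le_trans (measure_union_le _ _) (by gcongr; exact measure_union_le _ _)
      _ ≤ 0 + (c.K x b + ∑' y : s, c.K x y) := by
        gcongr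
        · exact le_of_eq (not_rel_start c x)
        · have heq : {ω : ℕ → M | rel x (ω 0) ∧ rel a (ω 1)}
              = {ω | rel x (ω 0) ∧ rel b (ω 1)} := by
            ext ω
            exact and_congr_right fun _ =>
              ⟨fun h => rel_trans (rel_symm hab) h, fun h => rel_trans hab h⟩
          rw [heq]
          exact classcyl_le c x b
        · refine le_trans (measure_iUnion_le _) (ENNReal.tsum_le_tsum fun y => ?_)
          refine le_trans (measure_mono fun ω hω => ?_) (classcyl_le c x (y : M))
          exact ⟨hω.1, hω.2 ▸ rel_refl _⟩
      _ = c.K x b + ∑' y : s, c.K x y := by rw [zero_add]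
  -- total mass estimate
  have htotal : (∑' y : s, c.K x y) + c.K x a + c.K x b ≤ 1 := by
    rw [← c.K_row x]
    exact three_le (fun h => h (rel_refl a)) (fun h => h hab) hne
  have hfin : c.K x b + (∑' y : s, c.K x y) ≠ ⊤ := by
    intro htop
    have hle1 : c.K x b + (∑' y : s, c.K x y) ≤ 1 := by
      calc c.K x b + (∑' y : s, c.K x y) ≤ (∑' y : s, c.K x y) + c.K x a + c.K x b := by
            rw [add_comm]
            exact add_le_add (le_add_right le_rfl) le_rfl
        _ ≤ 1 := htotal
    rw [htop] at hle1
    exact absurd hle1 (by simp)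
  -- combine
  have hchain : c.K x b + (∑' y : s, c.K x y) + c.K x a ≤ c.K x b + (∑' y : s, c.K x y) := by
    calc c.K x b + (∑' y : s, c.K x y) + c.K x a
        = (∑' y : s, c.K x y) + c.K x a + c.K x b := by ring
      _ ≤ 1 := htotal
      _ ≤ c.K x b + ∑' y : s, c.K x y := hcover
  by_contra hKa
  have hlt : c.K x b + (∑' y : s, c.K x y) < c.K x b + (∑' y : s, c.K x y) + c.K x a :=
    ENNReal.lt_add_right hfin hKa
  exact lt_irrefl _ (hlt.trans_le hchain)

lemma singleton_null {a b : M} (hab : rel a b) (hne : a ≠ b) (x : M) (n : ℕ) :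
    c.P x {ω | ω (n + 1) = a} = 0 := by
  classical
  have hK : ∀ y, c.K y a = 0 := K_vanish c hab hne
  have hsub : {ω : ℕ → M | ω (n + 1) = a} ⊆
      ⋃ v : Fin (n + 1) → M, {ω | ∀ i ≤ n + 1, ω i =
        (fun i => if h : i < n + 1 then v ⟨i, h⟩ else a) i} := by
    intro ω hω
    refine Set.mem_iUnion.mpr ⟨fun i => ω i, fun i hi => ?_⟩
    by_cases h : i < n + 1
    · simp [h]
    · have hin : i = n + 1 := by omega
      subst hin
      simpa [h] using hω
  refine le_antisymm (le_trans (measure_mono hsub) ?_) (zero_le)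
  refine le_trans (measure_iUnion_le _) ?_
  have hzero : ∀ v : Fin (n + 1) → M,
      c.P x {ω | ∀ i ≤ n + 1, ω i = (fun i => if h : i < n + 1 then v ⟨i, h⟩ else a) i}
        = 0 := by
    intro v
    rw [c.markov x _ n]
    have h2 : (if h : n + 1 < n + 1 then v ⟨n + 1, h⟩ else a) = a := dif_neg (by omega)
    rw [h2, hK]
    simp
  exact le_of_eq (ENNReal.tsum_eq_zero.mpr hzero)

theorem allMeasurableSet (hpos : PositiveRecurrent c) (s : Set M) : MeasurableSet s := by
  suffices h : ∀ a : M, MeasurableSet ({a} : Set M) by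
    have hs : s = ⋃ y ∈ s, {y} := by simp
    rw [hs]
    exact MeasurableSet.biUnion (Set.to_countable s) fun y _ => h y
  intro a
  have hatom : MeasurableSet {y | rel a y} := atom_measurable a
  have heq : {y | rel a y} = {a} := by
    ext b
    simp only [Set.mem_setOf_eq, Set.mem_singleton_iff]
    constructor
    · intro hb
      by_contra hne
      have hne' : a ≠ b := fun h => hne h.symm
      have hnull : ∀ n : ℕ, c.P a {ω | ω (n + 1) = a} = 0 :=
        fun n => singleton_null c hb hne' a n
      set U := ⋃ n : ℕ, {ω : ℕ → M | ω (n + 1) = a} with hU_def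
      have hU : c.P a U = 0 :=
        le_antisymm (le_trans (measure_iUnion_le _) (by simp [hnull])) (zero_le)
      set N := toMeasurable (c.P a) U with hN_def
      have hNmeas : MeasurableSet N := measurableSet_toMeasurable _ _
      have hN0 : c.P a N = 0 := by rw [hN_def, measure_toMeasurable]; exact hU
      have := c.prob a
      have hcompl : c.P a Nᶜ = 1 := by
        rw [measure_compl hNmeas (measure_ne_top _ _), hN0, measure_univ]
        simp
      have hret : ∀ ω ∈ Nᶜ, retTime a 1 ω = ⊤ := by
        intro ω hω
        have hωU : ω ∉ U := fun h => hω (subset_toMeasurable _ _ h)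
        have hωn : ∀ n : ℕ, ω (n + 1) ≠ a := by
          intro n h
          exact hωU (Set.mem_iUnion.mpr ⟨n, h⟩)
        show (⨅ m ∈ {m : ℕ | retTime a 0 ω < (m : ℝ≥0∞) ∧ ω m = a}, (m : ℝ≥0∞)) = ⊤
        rw [iInf₂_eq_top]
        rintro m ⟨hm1, hm2⟩
        cases m with
        | zero => exact absurd hm1 (by simp [retTime])
        | succ m => exact absurd hm2 (hωn m)
      have hE : E c a (retTime a 1) = ⊤ := by
        rw [eq_top_iff]
        calc (⊤ : ℝ≥0∞) = ⊤ * c.P a Nᶜ := by rw [hcompl, mul_one]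
          _ = ∫⁻ ω, Set.indicator Nᶜ (fun _ => (⊤ : ℝ≥0∞)) ω ∂(c.P a) := by
            rw [lintegral_indicator hNmeas.compl, setLIntegral_const]
          _ ≤ ∫⁻ ω, retTime a 1 ω ∂(c.P a) := by
            refine lintegral_mono fun ω => ?_
            by_cases hω : ω ∈ Nᶜ
            · rw [Set.indicator_of_mem hω, hret ω hω]
            · rw [Set.indicator_of_notMem hω]
              exact zero_le
          _ = E c a (retTime a 1) := rfl
      exact absurd hE (lt_top_iff_ne_top.mp (hpos a))
    · intro hb
      rw [hb]
      exact rel_refl a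
  rw [← heq]
  exact hatom


end Boot

section Cyls

set_option linter.unusedSectionVars false

variable {M : Type*} [MeasurableSpace M] [Countable M]

/-- cylinder set given by a prefix -/
def Cyl (q : ℕ → M) (n : ℕ) : Set (ℕ → M) := {ω | ∀ i ≤ n, ω i = q i}

def extFn (n : ℕ) (v : Fin (n + 1) → M) : ℕ → M := fun j => v ⟨min j n, by omega⟩

lemma extFn_eq (n : ℕ) (v : Fin (n + 1) → M) {j : ℕ} (hj : j ≤ n) :
    extFn n v j = v ⟨j, by omega⟩ := by
  unfold extFn
  congr 1
  ext
  simp [Nat.min_eq_left hj]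

lemma cyl_congr {q q' : ℕ → M} {n : ℕ} (h : ∀ i ≤ n, q i = q' i) : Cyl q n = Cyl q' n := by
  ext ω
  constructor <;> intro hω i hi
  · rw [← h i hi]; exact hω i hi
  · rw [h i hi]; exact hω i hi

variable (hAll : ∀ s : Set M, MeasurableSet s)

include hAll

lemma coord_measurable (i : ℕ) (s : Set M) : MeasurableSet {ω : ℕ → M | ω i ∈ s} :=
  measurable_pi_apply i (hAll s)

lemma coord_eq_measurable (i : ℕ) (y : M) : MeasurableSet {ω : ℕ → M | ω i = y} :=
  coord_measurable hAll i {y}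

lemma cyl_measurable (q : ℕ → M) (n : ℕ) : MeasurableSet (Cyl q n) := by
  have h : Cyl q n = ⋂ (i : ℕ) (_ : i ≤ n), {ω : ℕ → M | ω i = q i} := by
    ext ω
    simp [Cyl, Set.mem_iInter]
  rw [h]
  exact MeasurableSet.iInter fun i => MeasurableSet.iInter fun _ => coord_eq_measurable hAll i (q i)

omit hAll in
lemma coord_eq_iUnion_cyl (i : ℕ) (y : M) :
    {ω : ℕ → M | ω i = y} =
      ⋃ (v : Fin (i + 1) → M) (_ : v ⟨i, Nat.lt_succ_self i⟩ = y), Cyl (extFn i v) i := by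
  ext ω
  simp only [Set.mem_setOf_eq, Set.mem_iUnion]
  constructor
  · intro hω
    refine ⟨fun j => ω j, ?_, fun j hj => ?_⟩
    · exact hω
    · rw [extFn_eq i _ hj]
  · rintro ⟨v, hv, hω⟩
    have := hω i le_rfl
    rw [extFn_eq i v le_rfl] at this
    rw [this]
    exact hv

lemma pi_eq_generateFrom_cyl :
    (MeasurableSpace.pi : MeasurableSpace (ℕ → M)) =
      MeasurableSpace.generateFrom {S : Set (ℕ → M) | ∃ q n, S = Cyl q n} := by
  refine le_antisymm ?_ (MeasurableSpace.generateFrom_le ?_)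
  · refine iSup_le fun i => ?_
    rintro t ⟨s, _, rfl⟩
    have h1 : (fun ω : ℕ → M => ω i) ⁻¹' s = ⋃ y : s, {ω : ℕ → M | ω i = (y : M)} := by
      ext ω
      simp [Set.mem_iUnion]
    rw [h1]
    refine MeasurableSet.iUnion fun y => ?_
    rw [coord_eq_iUnion_cyl i (y : M)]
    refine MeasurableSet.iUnion fun v => MeasurableSet.iUnion fun _ => ?_
    exact MeasurableSpace.measurableSet_generateFrom ⟨extFn i v, i, rfl⟩
  · rintro S ⟨q, n, rfl⟩
    exact cyl_measurable hAll q n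

omit hAll in
lemma isPiSystem_cyl : IsPiSystem {S : Set (ℕ → M) | ∃ q n, S = Cyl q n} := by
  rintro S ⟨q, n, rfl⟩ T ⟨q', n', rfl⟩ hne
  obtain ⟨ω0, hω0⟩ := hne
  rcases le_total n n' with h | h
  · have heq : Cyl q n ∩ Cyl q' n' = Cyl q' n' := by
      apply Set.inter_eq_self_of_subset_right
      intro ω hω i hi
      rw [hω i (hi.trans h), ← hω0.2 i (hi.trans h), hω0.1 i hi]
    rw [heq]
    exact ⟨q', n', rfl⟩
  · have heq : Cyl q n ∩ Cyl q' n' = Cyl q n := by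
      apply Set.inter_eq_self_of_subset_left
      intro ω hω i hi
      rw [hω i (hi.trans h), ← hω0.1 i (hi.trans h), hω0.2 i hi]
    rw [heq]
    exact ⟨q, n, rfl⟩

lemma measure_ext_cyl {μ ν : Measure (ℕ → M)} [IsFiniteMeasure μ]
    (h : ∀ q n, μ (Cyl q n) = ν (Cyl q n)) (hu : μ Set.univ = ν Set.univ) : μ = ν := by
  refine ext_of_generate_finite _ (pi_eq_generateFrom_cyl hAll) isPiSystem_cyl ?_ hu
  rintro S ⟨q, n, rfl⟩
  exact h q n

variable (c : Chain M)

omit hAll in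
lemma markov_cyl (x : M) (q : ℕ → M) (n : ℕ) :
    c.P x (Cyl q (n + 1)) = c.P x (Cyl q n) * c.K (q n) (q (n + 1)) :=
  c.markov x q n

omit hAll in
lemma cyl_zero (q : ℕ → M) : Cyl q 0 = {ω | ω 0 = q 0} := by
  ext ω
  simp [Cyl, Nat.le_zero]

lemma start_ne (x y : M) (h : y ≠ x) : c.P x {ω | ω 0 = y} = 0 := by
  have := c.prob x
  have hsub : {ω : ℕ → M | ω 0 = y} ⊆ {ω : ℕ → M | ω 0 = x}ᶜ := by
    intro ω hω hx
    exact h (hω ▸ hx)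
  refine le_antisymm (le_trans (measure_mono hsub) ?_) (zero_le)
  rw [measure_compl (coord_eq_measurable hAll 0 x) (measure_ne_top _ _), c.start x, measure_univ]
  simp

def combine (q q' : ℕ → M) (n : ℕ) : ℕ → M := fun i => if i < n then q i else q' (i - n)

omit hAll in
lemma combine_prefix {q q' : ℕ → M} {n : ℕ} (h : q' 0 = q n) {i : ℕ} (hi : i ≤ n) :
    combine q q' n i = q i := by
  unfold combine
  by_cases hlt : i < n
  · rw [if_pos hlt]
  · have : i = n := by omega
    subst this
    rw [if_neg hlt]
    simpa using h

omit hAll in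
lemma combine_shift (q q' : ℕ → M) (n j : ℕ) : combine q q' n (n + j) = q' j := by
  unfold combine
  rw [if_neg (by omega)]
  congr 1
  omega

omit hAll in
lemma inter_shf_cyl {q q' : ℕ → M} {n : ℕ} (h : q' 0 = q n) (m : ℕ) :
    Cyl q n ∩ shf n ⁻¹' Cyl q' m = Cyl (combine q q' n) (n + m) := by
  ext ω
  simp only [Set.mem_inter_iff, Set.mem_preimage]
  constructor
  · rintro ⟨h1, h2⟩ i hi
    by_cases hlt : i < n
    · rw [combine_prefix h (le_of_lt hlt)]
      exact h1 i (le_of_lt hlt)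
    · have hj : i = n + (i - n) := by omega
      rw [hj, combine_shift]
      have := h2 (i - n) (by omega)
      exact this
  · intro hω
    constructor
    · intro i hi
      rw [hω i (by omega), combine_prefix h hi]
    · intro j hj
      have := hω (n + j) (by omega)
      rw [combine_shift] at this
      exact this

omit hAll in
lemma inter_shf_cyl_empty {q q' : ℕ → M} {n : ℕ} (h : q' 0 ≠ q n) (m : ℕ) :
    Cyl q n ∩ shf n ⁻¹' Cyl q' m = ∅ := by
  ext ω
  simp only [Set.mem_inter_iff, Set.mem_preimage, Set.mem_empty_iff_false, iff_false, not_and]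
  intro h1 h2
  have ha := h1 n le_rfl
  have hb := h2 0 (Nat.zero_le m)
  have : shf n ω 0 = ω n := by simp [shf]
  rw [this, ha] at hb
  exact h (hb.symm)

omit hAll in
lemma cyl_subset_start (q' : ℕ → M) (m : ℕ) : Cyl q' m ⊆ {ω | ω 0 = q' 0} :=
  fun ω hω => hω 0 (Nat.zero_le m)

lemma cylinder_markov (x : M) (q : ℕ → M) (n : ℕ) (q' : ℕ → M) (m : ℕ) :
    c.P x (Cyl q n ∩ shf n ⁻¹' Cyl q' m) = c.P x (Cyl q n) * c.P (q n) (Cyl q' m) := by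
  have := c.prob (q n)
  by_cases h : q' 0 = q n
  · induction m with
    | zero =>
      rw [inter_shf_cyl h 0]
      have h1 : Cyl (combine q q' n) (n + 0) = Cyl q n := by
        rw [Nat.add_zero]
        exact cyl_congr fun i hi => combine_prefix h hi
      rw [h1, cyl_zero, h, c.start (q n), mul_one]
    | succ m ih =>
      rw [inter_shf_cyl h (m + 1)]
      have h1 : n + (m + 1) = (n + m) + 1 := by omega
      rw [h1, markov_cyl]
      have h2 : combine q q' n (n + m) = q' m := combine_shift q q' n m
      have h3 : combine q q' n (n + m + 1) = q' (m + 1) := by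
        have : n + m + 1 = n + (m + 1) := by omega
        rw [this, combine_shift]
      rw [h2, h3, ← inter_shf_cyl h m, ih, mul_assoc, ← markov_cyl]
  · rw [inter_shf_cyl_empty h m, measure_empty]
    have h2 : c.P (q n) (Cyl q' m) = 0 := by
      refine le_antisymm (le_trans (measure_mono (cyl_subset_start q' m)) ?_) (zero_le)
      exact le_of_eq (start_ne hAll c (q n) (q' 0) h)
    rw [h2, mul_zero]

lemma map_shf_restrict (x : M) (q : ℕ → M) (n : ℕ) :
    ((c.P x).restrict (Cyl q n)).map (shf n) = (c.P x (Cyl q n)) • c.P (q n) := by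
  have := c.prob x
  have := c.prob (q n)
  rcases eq_or_ne (c.P x (Cyl q n)) 0 with h0 | h0
  · rw [Measure.restrict_eq_zero.mpr h0, h0, zero_smul]
    simp
  · have hfin : IsFiniteMeasure ((c.P x).restrict (Cyl q n)) := by
      refine ⟨?_⟩
      rw [Measure.restrict_apply_univ]
      exact measure_lt_top _ _
    have hfin2 : IsFiniteMeasure (((c.P x).restrict (Cyl q n)).map (shf n)) := by
      refine ⟨?_⟩
      rw [Measure.map_apply (measurable_shf n) MeasurableSet.univ, Set.preimage_univ,
        Measure.restrict_apply_univ]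
      exact measure_lt_top _ _
    refine measure_ext_cyl hAll ?_ ?_
    · intro q' m
      rw [Measure.map_apply (measurable_shf n) (cyl_measurable hAll q' m),
        Measure.restrict_apply ((measurable_shf n) (cyl_measurable hAll q' m)),
        Set.inter_comm, cylinder_markov hAll c x q n q' m, Measure.smul_apply, smul_eq_mul]
    · rw [Measure.map_apply (measurable_shf n) MeasurableSet.univ, Set.preimage_univ,
        Measure.restrict_apply_univ, Measure.smul_apply, smul_eq_mul, measure_univ, mul_one]

/-- events determined by the first `n+1` coordinates -/
def IsCylEvent (n : ℕ) (B : Set (ℕ → M)) : Prop :=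
  ∀ ω ω', (∀ i ≤ n, ω i = ω' i) → ω ∈ B → ω' ∈ B

open Classical in
def cylFam (n : ℕ) (B : Set (ℕ → M)) : (Fin (n + 1) → M) → Set (ℕ → M) := fun v =>
  if extFn n v ∈ B then Cyl (extFn n v) n else ∅

omit hAll in
lemma cylEvent_eq {n : ℕ} {B : Set (ℕ → M)} (h : IsCylEvent n B) :
    B = ⋃ v, cylFam n B v := by
  classical
  ext ω
  simp only [Set.mem_iUnion, cylFam]
  constructor
  · intro hω
    refine ⟨fun j => ω j, ?_⟩
    have hmem : extFn n (fun j : Fin (n+1) => ω j) ∈ B := by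
      refine h ω _ (fun i hi => ?_) hω
      rw [extFn_eq n _ hi]
    rw [if_pos hmem]
    intro i hi
    rw [extFn_eq n _ hi]
  · rintro ⟨v, hv⟩
    by_cases hmem : extFn n v ∈ B
    · rw [if_pos hmem] at hv
      exact h (extFn n v) ω (fun i hi => (hv i hi).symm) hmem
    · rw [if_neg hmem] at hv
      exact absurd hv (Set.notMem_empty ω)

lemma cylFam_measurable {n : ℕ} {B : Set (ℕ → M)} (v : Fin (n + 1) → M) :
    MeasurableSet (cylFam n B v) := by
  classical
  unfold cylFam
  by_cases hmem : extFn n v ∈ B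
  · rw [if_pos hmem]; exact cyl_measurable hAll _ n
  · rw [if_neg hmem]; exact MeasurableSet.empty

omit hAll in
lemma cylFam_disjoint (n : ℕ) (B : Set (ℕ → M)) : Pairwise (Function.onFun Disjoint (cylFam n B)) := by
  classical
  intro v w hvw
  simp only [Function.onFun, cylFam]
  by_cases hv : extFn n v ∈ B
  · by_cases hw : extFn n w ∈ B
    · rw [if_pos hv, if_pos hw]
      rw [Set.disjoint_left]
      intro ω hω1 hω2
      apply hvw
      funext j
      have h1 := hω1 j (by omega)
      have h2 := hω2 j (by omega)
      rw [extFn_eq n v (by omega : (j : ℕ) ≤ n)] at h1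
      rw [extFn_eq n w (by omega : (j : ℕ) ≤ n)] at h2
      have h3 := h1.symm.trans h2
      simpa using h3
    · rw [if_neg hw]; exact Set.disjoint_empty _
  · rw [if_neg hv]; exact Set.empty_disjoint _

lemma cylEvent_measurable {n : ℕ} {B : Set (ℕ → M)} (h : IsCylEvent n B) :
    MeasurableSet B := by
  rw [cylEvent_eq h]
  exact MeasurableSet.iUnion fun v => cylFam_measurable hAll v

theorem strong_markov_lintegral {x y : M} {n : ℕ} {B : Set (ℕ → M)}
    (hB : IsCylEvent n B) (hBy : ∀ ω ∈ B, ω n = y)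
    {f : (ℕ → M) → ℝ≥0∞} (hf : Measurable f) :
    ∫⁻ ω in B, f (shf n ω) ∂(c.P x) = c.P x B * ∫⁻ ω, f ω ∂(c.P y) := by
  classical
  have hmeas : ∀ v, MeasurableSet (cylFam n B v) := fun v => cylFam_measurable hAll v
  have hdisj := cylFam_disjoint (M := M) n B
  calc ∫⁻ ω in B, f (shf n ω) ∂(c.P x)
      = ∫⁻ ω in ⋃ v, cylFam n B v, f (shf n ω) ∂(c.P x) := by rw [← cylEvent_eq hB]
    _ = ∑' v, ∫⁻ ω in cylFam n B v, f (shf n ω) ∂(c.P x) :=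
        lintegral_iUnion hmeas hdisj _
    _ = ∑' v, c.P x (cylFam n B v) * ∫⁻ ω, f ω ∂(c.P y) := by
        refine tsum_congr fun v => ?_
        by_cases hv : extFn n v ∈ B
        · have h1 : cylFam n B v = Cyl (extFn n v) n := by simp [cylFam, if_pos hv]
          rw [h1]
          have h2 : ∫⁻ ω in Cyl (extFn n v) n, f (shf n ω) ∂(c.P x)
              = ∫⁻ ω, f ω ∂(((c.P x).restrict (Cyl (extFn n v) n)).map (shf n)) :=
            (lintegral_map hf (measurable_shf n)).symm
          rw [h2, map_shf_restrict hAll c x (extFn n v) n]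
          have h3 : extFn n v n = y := hBy _ hv
          rw [h3, lintegral_smul_measure, smul_eq_mul]
        · have h1 : cylFam n B v = ∅ := by simp [cylFam, if_neg hv]
          rw [h1]
          simp
    _ = (∑' v, c.P x (cylFam n B v)) * ∫⁻ ω, f ω ∂(c.P y) := ENNReal.tsum_mul_right
    _ = c.P x B * ∫⁻ ω, f ω ∂(c.P y) := by
        rw [← measure_iUnion hdisj hmeas, ← cylEvent_eq hB]

theorem strong_markov_set {x y : M} {n : ℕ} {B : Set (ℕ → M)}
    (hB : IsCylEvent n B) (hBy : ∀ ω ∈ B, ω n = y)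
    {S : Set (ℕ → M)} (hS : MeasurableSet S) :
    c.P x (B ∩ shf n ⁻¹' S) = c.P x B * c.P y S := by
  have hf : Measurable (S.indicator (fun _ => (1 : ℝ≥0∞))) :=
    measurable_const.indicator hS
  have h := strong_markov_lintegral hAll c (x := x) hB hBy hf
  have h1 : ∫⁻ ω, S.indicator (fun _ => (1:ℝ≥0∞)) ω ∂(c.P y) = c.P y S := by
    rw [lintegral_indicator hS, setLIntegral_one]
  have h2 : ∫⁻ ω in B, S.indicator (fun _ => (1:ℝ≥0∞)) (shf n ω) ∂(c.P x)
      = c.P x (B ∩ shf n ⁻¹' S) := by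
    have hps : MeasurableSet (shf n ⁻¹' S) := (measurable_shf n) hS
    have heq : ∀ ω : ℕ → M, S.indicator (fun _ => (1:ℝ≥0∞)) (shf n ω)
        = (shf n ⁻¹' S).indicator (fun _ => (1:ℝ≥0∞)) ω := by
      intro ω
      by_cases hω : shf n ω ∈ S
      · simp [Set.indicator_of_mem, hω]
      · simp [Set.indicator_of_notMem, hω]
    rw [lintegral_congr heq, lintegral_indicator hps, setLIntegral_one,
      Measure.restrict_apply hps, Set.inter_comm]
  rw [h2, h1] at h
  exact h

end Cyls


section RetE

set_option linter.unusedSectionVars false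

variable {M : Type*} [MeasurableSpace M] [Countable M]
variable (hAll : ∀ s : Set M, MeasurableSet s)

include hAll

lemma measurable_hitTime (x : M) : Measurable (hitTime {x} : (ℕ → M) → ℝ≥0∞) := by
  classical
  have h : (hitTime {x} : (ℕ → M) → ℝ≥0∞)
      = fun ω => ⨅ n : ℕ, (if ω n = x then (n : ℝ≥0∞) else ⊤) := by
    funext ω
    rw [hitTime_eq_nInf, nInf_eq_iInf]
  rw [h]
  exact Measurable.iInf fun n =>
    Measurable.ite (coord_eq_measurable hAll n x) measurable_const measurable_const

lemma measurable_retTime (z : M) (k : ℕ) : Measurable (retTime z k) := by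
  classical
  induction k with
  | zero => exact measurable_const
  | succ k ih =>
    have h : (retTime z (k + 1)) = fun ω =>
        ⨅ n : ℕ, (if retTime z k ω < (n : ℝ≥0∞) ∧ ω n = z then (n : ℝ≥0∞) else ⊤) := by
      funext ω
      rw [retTime_succ_eq, nInf_eq_iInf]
    rw [h]
    refine Measurable.iInf fun n => ?_
    refine Measurable.ite ?_ measurable_const measurable_const
    have h1 : {ω : ℕ → M | retTime z k ω < (n : ℝ≥0∞) ∧ ω n = z}
        = (retTime z k ⁻¹' (Set.Iio (n : ℝ≥0∞))) ∩ {ω | ω n = z} := rfl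
    rw [h1]
    exact (ih measurableSet_Iio).inter (coord_eq_measurable hAll n z)

lemma measurable_coverTime (A : Set M) : Measurable (coverTime A) := by
  haveI : Countable ↥A := (Set.to_countable A).to_subtype
  have h : coverTime A = fun ω => ⨆ x : A, hitTime {(x : M)} ω := by
    funext ω
    rw [coverTime, iSup_subtype']
  rw [h]
  exact Measurable.iSup fun x => measurable_hitTime hAll (x : M)

omit hAll in
lemma retE_isCyl (z : M) (k n : ℕ) :
    IsCylEvent n {ω : ℕ → M | retTime z k ω = (n : ℝ≥0∞)} :=
  fun ω ω' hpre h => retTime_cyl k hpre h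

omit hAll in
lemma retE_endpoint (z : M) {k : ℕ} (hk : 1 ≤ k) (n : ℕ) :
    ∀ ω ∈ {ω : ℕ → M | retTime z k ω = (n : ℝ≥0∞)}, ω n = z := by
  intro ω hω
  obtain ⟨k', rfl⟩ : ∃ k', k = k' + 1 := ⟨k - 1, by omega⟩
  exact (retTime_eq_coe hω).1

omit hAll in
lemma retE_disjoint (z : M) (k : ℕ) :
    Pairwise (Function.onFun Disjoint fun n : ℕ => {ω : ℕ → M | retTime z k ω = (n : ℝ≥0∞)}) := by
  intro n m hnm
  rw [Function.onFun, Set.disjoint_left]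
  intro ω h1 h2
  rw [Set.mem_setOf_eq] at h1 h2
  rw [h1] at h2
  exact hnm (by exact_mod_cast h2)

omit hAll in
lemma compl_retE (z : M) (k : ℕ) :
    (⋃ n : ℕ, {ω : ℕ → M | retTime z k ω = (n : ℝ≥0∞)})ᶜ = {ω | retTime z k ω = ⊤} := by
  ext ω
  simp only [Set.mem_compl_iff, Set.mem_iUnion, Set.mem_setOf_eq, not_exists]
  constructor
  · intro h
    rcases retTime_cases z k ω with ⟨n, hn⟩ | htop
    · exact absurd hn (h n)
    · exact htop
  · intro h n hn
    rw [h] at hn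
    exact (by simp : ((n:ℝ≥0∞) ≠ ⊤)) hn.symm

variable (c : Chain M)

lemma retE_measurable (z : M) (k n : ℕ) :
    MeasurableSet {ω : ℕ → M | retTime z k ω = (n : ℝ≥0∞)} :=
  (measurable_retTime hAll z k) (measurableSet_singleton _)

lemma retE_top_measurable (z : M) (k : ℕ) :
    MeasurableSet {ω : ℕ → M | retTime z k ω = ⊤} :=
  (measurable_retTime hAll z k) (measurableSet_singleton _)

/-- fiber decomposition of an integral along the values of `retTime z k` -/
lemma lintegral_fiber (z : M) (k : ℕ) {x : M}
    (hfin : c.P x {ω | retTime z k ω = ⊤} = 0) (g : (ℕ → M) → ℝ≥0∞) :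
    ∫⁻ ω, g ω ∂(c.P x) = ∑' n : ℕ, ∫⁻ ω in {ω | retTime z k ω = (n : ℝ≥0∞)}, g ω ∂(c.P x) := by
  set U := ⋃ n : ℕ, {ω : ℕ → M | retTime z k ω = (n : ℝ≥0∞)} with hU_def
  have hUmeas : MeasurableSet U :=
    MeasurableSet.iUnion fun n => retE_measurable hAll z k n
  have hUc : c.P x Uᶜ = 0 := by
    rw [hU_def, compl_retE]
    exact hfin
  calc ∫⁻ ω, g ω ∂(c.P x)
      = ∫⁻ ω in U, g ω ∂(c.P x) + ∫⁻ ω in Uᶜ, g ω ∂(c.P x) :=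
        (lintegral_add_compl g hUmeas).symm
    _ = ∫⁻ ω in U, g ω ∂(c.P x) := by
        rw [setLIntegral_measure_zero _ _ hUc, add_zero]
    _ = ∑' n : ℕ, ∫⁻ ω in {ω | retTime z k ω = (n : ℝ≥0∞)}, g ω ∂(c.P x) :=
        lintegral_iUnion (fun n => retE_measurable hAll z k n) (retE_disjoint z k) g

lemma measure_fiber (z : M) (k : ℕ) {x : M}
    (hfin : c.P x {ω | retTime z k ω = ⊤} = 0) :
    ∑' n : ℕ, c.P x {ω | retTime z k ω = (n : ℝ≥0∞)} = 1 := by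
  have := c.prob x
  have h := lintegral_fiber hAll c z k hfin (fun _ => 1)
  rw [lintegral_one, measure_univ] at h
  calc ∑' n : ℕ, c.P x {ω | retTime z k ω = (n : ℝ≥0∞)}
      = ∑' n : ℕ, ∫⁻ _ in {ω | retTime z k ω = (n : ℝ≥0∞)}, 1 ∂(c.P x) :=
        tsum_congr fun n => (setLIntegral_one _).symm
    _ = 1 := h.symm

lemma ret_one_fin (hpos : PositiveRecurrent c) (z : M) :
    c.P z {ω | retTime z 1 ω = ⊤} = 0 := by
  have h := ae_lt_top (measurable_retTime hAll z 1) (by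
    have := hpos z
    rw [E] at this
    exact this.ne)
  rw [ae_iff] at h
  have heq : {ω : ℕ → M | ¬ retTime z 1 ω < ⊤} = {ω | retTime z 1 ω = ⊤} := by
    ext ω
    simp [lt_top_iff_ne_top]
  rwa [heq] at h

/-- the master induction: a.s. finiteness and Kac-type additivity of `E[T^k]` -/
lemma ret_fin_E (hpos : PositiveRecurrent c) (z : M) :
    ∀ k, 1 ≤ k → c.P z {ω | retTime z k ω = ⊤} = 0 ∧
      E c z (retTime z k) = (k : ℝ≥0∞) * E c z (retTime z 1) := by
  have := c.prob z
  intro k hk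
  induction k with
  | zero => omega
  | succ k ih =>
    rcases eq_or_lt_of_le hk with h1 | h1
    · have hk0 : k = 0 := by omega
      subst hk0
      exact ⟨ret_one_fin hAll c hpos z, by simp⟩
    · have hk1 : 1 ≤ k := by omega
      obtain ⟨hfin, hE⟩ := ih hk1
      have hsm_set : ∀ (n : ℕ) (S : Set (ℕ → M)), MeasurableSet S →
          c.P z ({ω | retTime z k ω = (n : ℝ≥0∞)} ∩ shf n ⁻¹' S)
            = c.P z {ω | retTime z k ω = (n : ℝ≥0∞)} * c.P z S := by
        intro n S hS
        exact strong_markov_set hAll c (retE_isCyl z k n) (retE_endpoint z hk1 n) hS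
      -- finiteness of ret (k+1)
      have hfin' : c.P z {ω | retTime z (k+1) ω = ⊤} = 0 := by
        have hsub : {ω : ℕ → M | retTime z (k+1) ω = ⊤} ⊆
            (⋃ n : ℕ, {ω : ℕ → M | retTime z k ω = (n : ℝ≥0∞)})ᶜ ∪
              ⋃ n : ℕ, ({ω | retTime z k ω = (n : ℝ≥0∞)} ∩ shf n ⁻¹' {ω | retTime z 1 ω = ⊤}) := by
          intro ω hω
          rcases retTime_cases z k ω with ⟨n, hn⟩ | htop
          · right
            refine Set.mem_iUnion.mpr ⟨n, hn, ?_⟩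
            have hid := retTime_succ_shift hn
            rw [Set.mem_setOf_eq] at hω
            rw [hω] at hid
            simp only [Set.mem_preimage, Set.mem_setOf_eq]
            rcases retTime_cases z 1 (shf n ω) with ⟨m, hm⟩ | htop'
            · rw [hm] at hid
              exact absurd hid.symm (by
                push_cast
                exact_mod_cast (by simp : ((n:ℝ≥0∞) + (m:ℝ≥0∞) ≠ ⊤)))
            · exact htop'
          · left
            rw [compl_retE]
            exact htop
        refine le_antisymm (le_trans (measure_mono hsub) ?_) (zero_le)
        refine le_trans (measure_union_le _ _) ?_
        have h2 : c.P z (⋃ n : ℕ, ({ω | retTime z k ω = (n : ℝ≥0∞)} ∩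
            shf n ⁻¹' {ω | retTime z 1 ω = ⊤})) = 0 := by
          refine le_antisymm (le_trans (measure_iUnion_le _) ?_) (zero_le)
          have h3 : ∀ n : ℕ, c.P z ({ω | retTime z k ω = (n : ℝ≥0∞)} ∩
              shf n ⁻¹' {ω | retTime z 1 ω = ⊤}) = 0 := by
            intro n
            rw [hsm_set n _ (retE_top_measurable hAll z 1), ret_one_fin hAll c hpos z,
              mul_zero]
          refine le_of_eq (ENNReal.tsum_eq_zero.mpr fun n => ?_)
          exact h3 n
        rw [compl_retE, hfin, h2, add_zero]
      refine ⟨hfin', ?_⟩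
      -- expectation step
      have hstep : E c z (retTime z (k+1)) = E c z (retTime z k) + E c z (retTime z 1) := by
        rw [E, lintegral_fiber hAll c z k hfin (retTime z (k+1))]
        have hterm : ∀ n : ℕ, ∫⁻ ω in {ω | retTime z k ω = (n : ℝ≥0∞)},
            retTime z (k+1) ω ∂(c.P z)
              = (n : ℝ≥0∞) * c.P z {ω | retTime z k ω = (n : ℝ≥0∞)} +
                c.P z {ω | retTime z k ω = (n : ℝ≥0∞)} * E c z (retTime z 1) := by
          intro n
          have hcongr : ∫⁻ ω in {ω | retTime z k ω = (n : ℝ≥0∞)},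
              retTime z (k+1) ω ∂(c.P z)
                = ∫⁻ ω in {ω | retTime z k ω = (n : ℝ≥0∞)},
                    ((n : ℝ≥0∞) + retTime z 1 (shf n ω)) ∂(c.P z) := by
            refine setLIntegral_congr_fun (retE_measurable hAll z k n) ?_
            refine fun ω hω => ?_
            exact retTime_succ_shift hω
          rw [hcongr, lintegral_add_left measurable_const, setLIntegral_const,
            strong_markov_lintegral hAll c (retE_isCyl z k n) (retE_endpoint z hk1 n)
              (measurable_retTime hAll z 1)]
          rfl
        rw [tsum_congr hterm, ENNReal.tsum_add, ENNReal.tsum_mul_right]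
        congr 1
        · -- ∑ n * μ(fiber) = E retTime z k
          rw [E, lintegral_fiber hAll c z k hfin (retTime z k)]
          refine tsum_congr fun n => ?_
          have hcongr : ∫⁻ ω in {ω | retTime z k ω = (n : ℝ≥0∞)}, retTime z k ω ∂(c.P z)
              = ∫⁻ _ in {ω | retTime z k ω = (n : ℝ≥0∞)}, (n : ℝ≥0∞) ∂(c.P z) := by
            refine setLIntegral_congr_fun (retE_measurable hAll z k n) ?_
            exact fun ω hω => hω
          rw [hcongr, setLIntegral_const]
        · rw [measure_fiber hAll c z k hfin, one_mul]
      rw [hstep, hE]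
      push_cast
      ring
end RetE


section LayerCake

set_option linter.unusedSectionVars false

lemma tsum_ite_lt (t : ℝ≥0∞) (h : (∃ m : ℕ, t = m) ∨ t = ⊤) :
    ∑' n : ℕ, (if (n : ℝ≥0∞) < t then (1 : ℝ≥0∞) else 0) = t := by
  classical
  rcases h with ⟨m, rfl⟩ | rfl
  · have h1 : ∀ n : ℕ, (if (n : ℝ≥0∞) < (m : ℝ≥0∞) then (1:ℝ≥0∞) else 0)
        = (if n < m then (1:ℝ≥0∞) else 0) := by
      intro n
      by_cases hn : n < m
      · rw [if_pos hn, if_pos (by exact_mod_cast hn)]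
      · rw [if_neg hn, if_neg (by exact_mod_cast hn)]
    rw [tsum_congr h1]
    rw [tsum_eq_sum (s := Finset.range m) (fun n hn => if_neg (by
      simp only [Finset.mem_range, not_lt] at hn
      omega))]
    rw [Finset.sum_ite_of_true (fun n hn => by
      simp only [Finset.mem_range] at hn
      exact hn)]
    simp
  · have h1 : ∀ n : ℕ, (if (n : ℝ≥0∞) < ⊤ then (1:ℝ≥0∞) else 0) = 1 := fun n =>
      if_pos (by simp)
    rw [tsum_congr h1]
    exact ENNReal.tsum_const_eq_top_of_ne_zero one_ne_zero

lemma lintegral_tsum_gt {α : Type*} [MeasurableSpace α] (μ : Measure α)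
    {f : α → ℝ≥0∞} (hf : Measurable f) (hval : ∀ a, (∃ n : ℕ, f a = n) ∨ f a = ⊤) :
    ∫⁻ a, f a ∂μ = ∑' n : ℕ, μ {a | (n : ℝ≥0∞) < f a} := by
  classical
  have hpt : ∀ a, f a = ∑' n : ℕ,
      Set.indicator {a | (n : ℝ≥0∞) < f a} (fun _ => (1 : ℝ≥0∞)) a := by
    intro a
    have h1 : ∀ n : ℕ, Set.indicator {a | (n : ℝ≥0∞) < f a} (fun _ => (1:ℝ≥0∞)) a
        = (if (n : ℝ≥0∞) < f a then (1:ℝ≥0∞) else 0) := by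
      intro n
      simp [Set.indicator_apply]
    rw [tsum_congr h1, tsum_ite_lt (f a) (hval a)]
  calc ∫⁻ a, f a ∂μ
      = ∫⁻ a, ∑' n : ℕ, Set.indicator {a | (n : ℝ≥0∞) < f a} (fun _ => (1:ℝ≥0∞)) a ∂μ :=
        lintegral_congr hpt
    _ = ∑' n : ℕ, ∫⁻ a, Set.indicator {a | (n : ℝ≥0∞) < f a} (fun _ => (1:ℝ≥0∞)) a ∂μ :=
        lintegral_tsum fun n => (measurable_const.indicator (hf measurableSet_Ioi)).aemeasurable
    _ = ∑' n : ℕ, μ {a | (n : ℝ≥0∞) < f a} := by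
        refine tsum_congr fun n => ?_
        have hms : MeasurableSet {a | (n : ℝ≥0∞) < f a} := hf measurableSet_Ioi
        rw [lintegral_indicator hms, setLIntegral_one]

end LayerCake

section Stat

set_option linter.unusedSectionVars false

variable {M : Type*} [MeasurableSpace M] [Countable M]
variable (hAll : ∀ s : Set M, MeasurableSet s) (c : Chain M)

include hAll

/-- the stationary path measure -/
def statM (c : Chain M) (π : M → ℝ≥0∞) : Measure (ℕ → M) :=
  Measure.sum (fun x : M => π x • c.P x)

omit hAll in
lemma statM_apply (π : M → ℝ≥0∞) {S : Set (ℕ → M)} (hS : MeasurableSet S) :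
    statM c π S = ∑' x, π x * c.P x S := by
  rw [statM, Measure.sum_apply _ hS]
  refine tsum_congr fun x => ?_
  rw [Measure.smul_apply, smul_eq_mul]

omit hAll in
lemma statM_univ {π : M → ℝ≥0∞} (hπ : Invariant c π) : statM c π Set.univ = 1 := by
  rw [statM_apply c π MeasurableSet.univ]
  have h1 : ∀ x : M, π x * c.P x Set.univ = π x := by
    intro x
    have := c.prob x
    rw [measure_univ, mul_one]
  rw [tsum_congr h1, hπ.1]

lemma P_cyl_zero (x : M) (q : ℕ → M) (n : ℕ) (h : q 0 ≠ x) : c.P x (Cyl q n) = 0 := by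
  refine le_antisymm (le_trans (measure_mono (cyl_subset_start q n)) ?_) (zero_le)
  exact le_of_eq (start_ne hAll c x (q 0) h)

def prodK (c : Chain M) (q : ℕ → M) : ℕ → ℝ≥0∞
  | 0 => 1
  | n + 1 => prodK c q n * c.K (q n) (q (n + 1))

omit hAll in
lemma P_cyl (x : M) (q : ℕ → M) (n : ℕ) (h : q 0 = x) : c.P x (Cyl q n) = prodK c q n := by
  induction n with
  | zero =>
    rw [cyl_zero, h, c.start x]
    rfl
  | succ n ih =>
    rw [markov_cyl, ih]
    rfl

lemma statM_cyl (π : M → ℝ≥0∞) (q : ℕ → M) (n : ℕ) :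
    statM c π (Cyl q n) = π (q 0) * prodK c q n := by
  rw [statM_apply c π (cyl_measurable hAll q n)]
  rw [tsum_eq_single (q 0) (fun x hx => by
    rw [P_cyl_zero hAll c x q n (Ne.symm hx), mul_zero])]
  rw [P_cyl c (q 0) q n rfl]

/-- `y :: q` -/
def consFn (y : M) (q : ℕ → M) : ℕ → M := fun i =>
  match i with
  | 0 => y
  | j + 1 => q j

omit hAll in
lemma prodK_cons (y : M) (q : ℕ → M) :
    ∀ j, prodK c (consFn y q) (j + 1) = c.K y (q 0) * prodK c q j := by
  intro j
  induction j with
  | zero =>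
    show prodK c (consFn y q) 0 * c.K (consFn y q 0) (consFn y q 1) = c.K y (q 0) * prodK c q 0
    show (1 : ℝ≥0∞) * c.K y (q 0) = c.K y (q 0) * 1
    rw [one_mul, mul_one]
  | succ j ih =>
    show prodK c (consFn y q) (j + 1) * c.K (consFn y q (j + 1)) (consFn y q (j + 2))
        = c.K y (q 0) * (prodK c q j * c.K (q j) (q (j + 1)))
    rw [ih]
    show c.K y (q 0) * prodK c q j * c.K (q j) (q (j + 1)) = _
    rw [mul_assoc]

lemma statM_shift {π : M → ℝ≥0∞} (hπ : Invariant c π) :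
    (statM c π).map (shf 1) = statM c π := by
  have hfin : IsFiniteMeasure (statM c π) := by
    refine ⟨?_⟩
    rw [statM_univ c hπ]
    exact one_lt_top
  have hfin2 : IsFiniteMeasure ((statM c π).map (shf 1)) := by
    refine ⟨?_⟩
    rw [Measure.map_apply (measurable_shf 1) MeasurableSet.univ, Set.preimage_univ,
      statM_univ c hπ]
    exact one_lt_top
  refine measure_ext_cyl hAll ?_ ?_
  · intro q n
    rw [Measure.map_apply (measurable_shf 1) (cyl_measurable hAll q n)]
    have hpre : shf 1 ⁻¹' Cyl q n = ⋃ y : M, Cyl (consFn y q) (n + 1) := by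
      ext ω
      simp only [Set.mem_preimage, Set.mem_iUnion]
      constructor
      · intro hω
        refine ⟨ω 0, fun i hi => ?_⟩
        match i with
        | 0 => rfl
        | j + 1 =>
          show ω (j + 1) = q j
          have := hω j (by omega)
          rw [shf] at this
          rwa [Nat.add_comm 1 j] at this
      · rintro ⟨y, hy⟩ i hi
        show ω (1 + i) = q i
        have := hy (i + 1) (by omega)
        rw [Nat.add_comm 1 i]
        exact this
    have hdis : Pairwise (Function.onFun Disjoint fun y : M => Cyl (consFn y q) (n + 1)) := by
      intro y w hyw
      rw [Function.onFun, Set.disjoint_left]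
      intro ω h1 h2
      have e1 := h1 0 (by omega)
      have e2 := h2 0 (by omega)
      exact hyw ((e1.symm.trans e2 : consFn y q 0 = consFn w q 0))
    rw [hpre, measure_iUnion hdis (fun y => cyl_measurable hAll _ _)]
    have hterm : ∀ y : M, statM c π (Cyl (consFn y q) (n + 1))
        = π y * c.K y (q 0) * prodK c q n := by
      intro y
      rw [statM_cyl hAll c π _ (n + 1)]
      show π y * prodK c (consFn y q) (n + 1) = _
      rw [prodK_cons c y q n, mul_assoc]
    rw [tsum_congr hterm, statM_cyl hAll c π q n]
    rw [ENNReal.tsum_mul_right, (hπ.2 (q 0))]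
  · rw [Measure.map_apply (measurable_shf 1) MeasurableSet.univ, Set.preimage_univ]

end Stat


section Kac

set_option linter.unusedSectionVars false

variable {M : Type*} [MeasurableSpace M] [Countable M]
variable (hAll : ∀ s : Set M, MeasurableSet s) (c : Chain M)

include hAll

omit hAll in
lemma retOne_gt_event (z : M) (n : ℕ) :
    {ω : ℕ → M | (n : ℝ≥0∞) < retTime z 1 ω} = {ω | ∀ i, 1 ≤ i → i ≤ n → ω i ≠ z} := by
  ext ω
  simp only [Set.mem_setOf_eq]
  rw [retTime_succ_eq]
  rw [show (nInf fun m => retTime z 0 ω < (m:ℝ≥0∞) ∧ ω m = z)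
      = nInf fun m => 0 < m ∧ ω m = z from nInf_congr fun m => by
    rw [retTime_zero]
    constructor
    · rintro ⟨h1, h2⟩; exact ⟨by exact_mod_cast h1, h2⟩
    · rintro ⟨h1, h2⟩; exact ⟨by exact_mod_cast h1, h2⟩]
  rw [coe_lt_nInf_iff]
  constructor
  · intro h i h1 h2 hz
    exact h i h2 ⟨by omega, hz⟩
  · rintro h m hm ⟨h0, hz⟩
    exact h m (by omega) hm hz

lemma never_event_measurable (z : M) :
    MeasurableSet {ω : ℕ → M | ∀ i, 1 ≤ i → ω i ≠ z} := by
  have h : {ω : ℕ → M | ∀ i, 1 ≤ i → ω i ≠ z}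
      = ⋂ (i : ℕ) (_ : 1 ≤ i), {ω : ℕ → M | ω i = z}ᶜ := by
    ext ω
    simp [Set.mem_iInter]
  rw [h]
  exact MeasurableSet.iInter fun i => MeasurableSet.iInter fun _ =>
    (coord_eq_measurable hAll i z).compl

lemma bset_measurable (z : M) (N : ℕ) :
    MeasurableSet {ω : ℕ → M | ∀ i, 1 ≤ i → i ≤ N → ω i ≠ z} := by
  have h : {ω : ℕ → M | ∀ i, 1 ≤ i → i ≤ N → ω i ≠ z}
      = ⋂ (i : ℕ) (_ : 1 ≤ i) (_ : i ≤ N), {ω : ℕ → M | ω i = z}ᶜ := by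
    ext ω
    simp [Set.mem_iInter]
  rw [h]
  exact MeasurableSet.iInter fun i => MeasurableSet.iInter fun _ =>
    MeasurableSet.iInter fun _ => (coord_eq_measurable hAll i z).compl

lemma dset_measurable (z : M) (N : ℕ) :
    MeasurableSet {ω : ℕ → M | ∀ i, i ≤ N → ω i ≠ z} := by
  have h : {ω : ℕ → M | ∀ i, i ≤ N → ω i ≠ z}
      = ⋂ (i : ℕ) (_ : i ≤ N), {ω : ℕ → M | ω i = z}ᶜ := by
    ext ω
    simp [Set.mem_iInter]
  rw [h]
  exact MeasurableSet.iInter fun i => MeasurableSet.iInter fun _ =>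
    (coord_eq_measurable hAll i z).compl

omit hAll in
lemma inter_full {α : Type*} [MeasurableSpace α] (μ : Measure α) [IsProbabilityMeasure μ]
    {t : Set α} (ht : MeasurableSet t) (h1 : μ t = 1) (s : Set α) : μ (s ∩ t) = μ s := by
  have h2 := measure_inter_add_diff (μ := μ) s ht
  have h4 : μ tᶜ = 0 := by
    rw [measure_compl ht (measure_ne_top _ _), h1, measure_univ, tsub_self]
  have h3 : μ (s \ t) = 0 :=
    le_antisymm (le_trans (measure_mono (Set.diff_subset_compl s t)) (le_of_eq h4)) (zero_le)
  rw [← h2, h3, add_zero]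

lemma never_hit (hpos : PositiveRecurrent c) (hirr : Irreducible c) (x z : M) :
    c.P x {ω | ∀ i, 1 ≤ i → ω i ≠ z} = 0 := by
  have := c.prob z
  have := c.prob x
  set A := {ω : ℕ → M | ∀ i, 1 ≤ i → ω i ≠ z} with hA_def
  have hAmeas : MeasurableSet A := never_event_measurable hAll z
  set I := ⋂ j : ℕ, {ω : ℕ → M | retTime z j ω ≠ ⊤} with hI_def
  have hIc : c.P z Iᶜ = 0 := by
    rw [hI_def, Set.compl_iInter]
    refine le_antisymm (le_trans (measure_iUnion_le _) ?_) (zero_le)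
    have hterm : ∀ j : ℕ, c.P z {ω : ℕ → M | retTime z j ω ≠ ⊤}ᶜ = 0 := by
      intro j
      have hc : {ω : ℕ → M | retTime z j ω ≠ ⊤}ᶜ = {ω | retTime z j ω = ⊤} := by
        ext ω
        simp
      rw [hc]
      rcases Nat.eq_zero_or_pos j with rfl | hj
      · have he : {ω : ℕ → M | retTime z 0 ω = ⊤} = ∅ := by
          ext ω
          simp [retTime_zero]
        rw [he, measure_empty]
      · exact (ret_fin_E hAll c hpos z j hj).1
    refine le_of_eq (ENNReal.tsum_eq_zero.mpr hterm)
  obtain ⟨n₀, hn₀⟩ := hirr z x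
  have hB : IsCylEvent n₀ {ω : ℕ → M | ω n₀ = x} := by
    intro ω ω' hpre h
    show ω' n₀ = x
    rw [← hpre n₀ le_rfl]
    exact h
  have hsm := strong_markov_set hAll c (x := z) hB (fun ω hω => hω) hAmeas
  have hsub : {ω : ℕ → M | ω n₀ = x} ∩ shf n₀ ⁻¹' A ⊆ Iᶜ := by
    rintro ω ⟨h1, h2⟩ hI
    rw [hI_def, Set.mem_iInter] at hI
    have hI1 := hI (n₀ + 1)
    rcases retTime_cases z (n₀ + 1) ω with ⟨m, hm⟩ | htop
    · have hm1 : n₀ + 1 ≤ m := by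
        have := coe_le_retTime z (n₀ + 1) ω
        rw [hm] at this
        exact_mod_cast this
      have hmz : ω m = z := (retTime_eq_coe hm).1
      have h2' := h2 (m - n₀) (by omega)
      apply h2'
      show ω (n₀ + (m - n₀)) = z
      rw [show n₀ + (m - n₀) = m from by omega]
      exact hmz
    · exact hI1 htop
  have hz : c.P z ({ω : ℕ → M | ω n₀ = x} ∩ shf n₀ ⁻¹' A) = 0 :=
    le_antisymm (le_trans (measure_mono hsub) (le_of_eq hIc)) (zero_le)
  rw [hsm] at hz
  rcases mul_eq_zero.mp hz with h | h
  · exact absurd h (ne_of_gt hn₀)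
  · exact h

theorem kac (hpos : PositiveRecurrent c) (hirr : Irreducible c)
    {π : M → ℝ≥0∞} (hπ : Invariant c π) (z : M) :
    π z * E c z (retTime z 1) = 1 := by
  classical
  have := c.prob z
  set μ := statM c π with hμ_def
  haveI hPμ : IsProbabilityMeasure μ := ⟨statM_univ c hπ⟩
  set bset : ℕ → Set (ℕ → M) := fun N => {ω | ∀ i, 1 ≤ i → i ≤ N → ω i ≠ z} with hbset_def
  set cfun : ℕ → ℝ≥0∞ := fun n => π z * c.P z {ω | (n : ℝ≥0∞) < retTime z 1 ω} with hcfun_def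
  have hbmeas : ∀ N, MeasurableSet (bset N) := fun N => bset_measurable hAll z N
  -- one step
  have hstep : ∀ N, μ (bset N) = cfun N + μ (bset (N + 1)) := by
    intro N
    set t : Set (ℕ → M) := {ω | ω 0 = z} with ht_def
    have htmeas : MeasurableSet t := coord_eq_measurable hAll 0 z
    have hsplit := measure_inter_add_diff (μ := μ) (bset N) htmeas
    have hterm1 : μ (bset N ∩ t) = cfun N := by
      rw [statM_apply c π ((hbmeas N).inter htmeas)]
      have hoff : ∀ x, x ≠ z → π x * c.P x (bset N ∩ t) = 0 := by
        intro x hx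
        have := c.prob x
        have hx0 : c.P x (bset N ∩ t) = 0 := by
          refine le_antisymm (le_trans (measure_mono Set.inter_subset_right) ?_) (zero_le)
          exact le_of_eq (start_ne hAll c x z (Ne.symm hx))
        rw [hx0, mul_zero]
      rw [tsum_eq_single z hoff]
      have hPz1 : c.P z t = 1 := c.start z
      have h1 : c.P z (bset N ∩ t) = c.P z (bset N) := inter_full (c.P z) htmeas hPz1 _
      rw [h1, hcfun_def]
      congr 1
      rw [retOne_gt_event]
    have hterm2 : μ (bset N \ t) = μ (bset (N + 1)) := by
      set D : Set (ℕ → M) := {ω | ∀ i, i ≤ N → ω i ≠ z} with hD_def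
      have hDmeas : MeasurableSet D := dset_measurable hAll z N
      have he1 : bset N \ t = D := by
        ext ω
        simp only [hbset_def, ht_def, hD_def, Set.mem_diff, Set.mem_setOf_eq]
        constructor
        · rintro ⟨h1, h2⟩ i hi
          rcases Nat.eq_zero_or_pos i with rfl | hi1
          · exact h2
          · exact h1 i hi1 hi
        · intro h
          exact ⟨fun i h1 h2 => h i h2, h 0 (by omega)⟩
      have he2 : bset (N + 1) = shf 1 ⁻¹' D := by
        ext ω
        simp only [hbset_def, hD_def, Set.mem_preimage, Set.mem_setOf_eq]
        constructor
        · intro h i hi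
          show ω (1 + i) ≠ z
          exact h (1 + i) (by omega) (by omega)
        · intro h i h1 h2
          have := h (i - 1) (by omega)
          show ω i ≠ z
          have hsh : shf 1 ω (i - 1) = ω i := by
            show ω (1 + (i - 1)) = ω i
            congr 1
            omega
          rwa [hsh] at this
      rw [he1, he2]
      have hmap : μ (shf 1 ⁻¹' D) = (μ.map (shf 1)) D :=
        (Measure.map_apply (measurable_shf 1) hDmeas).symm
      rw [hmap, hμ_def, statM_shift hAll c hπ]
    rw [← hsplit, hterm1, hterm2]
  -- telescoping identity
  have hid : ∀ N, (∑ n ∈ Finset.range N, cfun n) + μ (bset N) = 1 := by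
    intro N
    induction N with
    | zero =>
      have hb0 : bset 0 = Set.univ := by
        ext ω
        simp only [hbset_def, Set.mem_setOf_eq, Set.mem_univ, iff_true]
        intro i h1 h2
        omega
      rw [hb0, measure_univ, Finset.sum_range_zero, zero_add]
    | succ N ih =>
      rw [Finset.sum_range_succ, add_assoc, ← hstep N, ih]
  -- pass to the limit
  have htsum : ∑' n, cfun n = 1 := by
    have hpart : ∀ N, ∑ n ∈ Finset.range N, cfun n = 1 - μ (bset N) := fun N =>
      ENNReal.eq_sub_of_add_eq (measure_ne_top μ _) (hid N)
    rw [ENNReal.tsum_eq_iSup_nat]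
    have h1 : (⨆ N, ∑ n ∈ Finset.range N, cfun n) = ⨆ N, (1 - μ (bset N)) := by
      exact iSup_congr hpart
    rw [h1, ← ENNReal.sub_iInf]
    have hmono : Antitone bset := by
      intro N N' hNN ω hω i h1 h2
      exact hω i h1 (by omega)
    have hiInf : (⨅ N, μ (bset N)) = μ (⋂ N, bset N) := by
      refine (hmono.measure_iInter (fun N => (hbmeas N).nullMeasurableSet)
        ⟨0, measure_ne_top μ _⟩).symm
    rw [hiInf]
    have hInter : (⋂ N, bset N) = {ω : ℕ → M | ∀ i, 1 ≤ i → ω i ≠ z} := by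
      ext ω
      simp only [Set.mem_iInter, hbset_def, Set.mem_setOf_eq]
      constructor
      · intro h i h1
        exact h i i h1 le_rfl
      · intro h N i h1 h2
        exact h i h1
    rw [hInter]
    have hzero : μ {ω : ℕ → M | ∀ i, 1 ≤ i → ω i ≠ z} = 0 := by
      rw [statM_apply c π (never_event_measurable hAll z)]
      refine ENNReal.tsum_eq_zero.mpr fun x => ?_
      rw [never_hit hAll c hpos hirr x z, mul_zero]
    rw [hzero, tsub_zero]
  -- identify with the expectation
  have hE : E c z (retTime z 1) = ∑' n : ℕ, c.P z {ω | (n : ℝ≥0∞) < retTime z 1 ω} := by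
    rw [E]
    exact lintegral_tsum_gt (c.P z) (measurable_retTime hAll z 1)
      (fun ω => retTime_cases z 1 ω)
  rw [hE, ← ENNReal.tsum_mul_left]
  exact htsum

end Kac


section HitFin

set_option linter.unusedSectionVars false

variable {M : Type*} [MeasurableSpace M] [Countable M]
variable (hAll : ∀ s : Set M, MeasurableSet s) (c : Chain M)

include hAll

omit hAll in
lemma hitTime_le_coe_iff {x : M} {ω : ℕ → M} {n : ℕ} :
    hitTime {x} ω ≤ (n : ℝ≥0∞) ↔ ∃ m, m ≤ n ∧ ω m = x := by
  rw [hitTime_eq_nInf, nInf_le_coe_iff]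

omit hAll in
lemma coe_lt_hitTime_iff {x : M} {ω : ℕ → M} {n : ℕ} :
    (n : ℝ≥0∞) < hitTime {x} ω ↔ ∀ m ≤ n, ω m ≠ x := by
  rw [hitTime_eq_nInf, coe_lt_nInf_iff]

omit hAll in
lemma hitTime_cases (x : M) (ω : ℕ → M) :
    (∃ n : ℕ, hitTime {x} ω = n) ∨ hitTime {x} ω = ⊤ := by
  rw [hitTime_eq_nInf]
  rcases nInf_cases (fun n => ω n = x) with ⟨n, hn, _⟩ | ⟨h, _⟩
  · exact Or.inl ⟨n, hn⟩
  · exact Or.inr h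

omit hAll in
lemma hitTime_shift_le (x : M) (ω : ℕ → M) (n : ℕ) :
    hitTime {x} ω ≤ (n : ℝ≥0∞) + hitTime {x} (shf n ω) := by
  rcases hitTime_cases x (shf n ω) with ⟨m, hm⟩ | htop
  · rw [hm]
    have hx : ω (n + m) = x := by
      rw [hitTime_eq_nInf] at hm
      have := (nInf_eq_coe_iff.mp hm).1
      exact this
    rw [hitTime_eq_nInf]
    refine le_trans (nInf_le hx) ?_
    push_cast
    rfl
  · rw [htop]
    simp

/-- the event that `x` is visited during the first `z`-block -/
def blockHit (z x : M) : Set (ℕ → M) :=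
  {ω | ∃ m : ℕ, 1 ≤ m ∧ (m : ℝ≥0∞) ≤ retTime z 1 ω ∧ ω m = x}

lemma blockHit_measurable (z x : M) : MeasurableSet (blockHit z x) := by
  have h : blockHit z x = ⋃ (m : ℕ) (_ : 1 ≤ m),
      ({ω : ℕ → M | (m : ℝ≥0∞) ≤ retTime z 1 ω} ∩ {ω | ω m = x}) := by
    ext ω
    simp only [blockHit, Set.mem_setOf_eq, Set.mem_iUnion, Set.mem_inter_iff]
    constructor
    · rintro ⟨m, h1, h2, h3⟩
      exact ⟨m, h1, h2, h3⟩
    · rintro ⟨m, h1, h2, h3⟩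
      exact ⟨m, h1, h2, h3⟩
  rw [h]
  refine MeasurableSet.iUnion fun m => MeasurableSet.iUnion fun _ => ?_
  exact ((measurable_retTime hAll z 1) measurableSet_Ici).inter (coord_eq_measurable hAll m x)

/-- positivity of the block hitting probability -/
lemma blockHit_pos (hpos : PositiveRecurrent c) (hirr : Irreducible c) (z x : M) :
    0 < c.P z (blockHit z x) := by
  have := c.prob z
  rw [pos_iff_ne_zero]
  intro hδ
  -- the eventual-hit event has probability 1
  have hev : c.P z {ω : ℕ → M | ∀ i, 1 ≤ i → ω i ≠ x} = 0 := never_hit hAll c hpos hirr z x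
  have hev1 : c.P z {ω : ℕ → M | ∀ i, 1 ≤ i → ω i ≠ x}ᶜ = 1 := by
    rw [measure_compl (never_event_measurable hAll x) (measure_ne_top _ _), hev, measure_univ,
      tsub_zero]
  -- the blocks
  set F : ℕ → Set (ℕ → M) := fun j =>
    {ω | ∃ m : ℕ, retTime z j ω < (m : ℝ≥0∞) ∧ (m : ℝ≥0∞) ≤ retTime z (j + 1) ω ∧ ω m = x}
    with hF_def
  have hF0 : c.P z (F 0) = 0 := by
    have h : F 0 = blockHit z x := by
      ext ω
      simp only [hF_def, blockHit, Set.mem_setOf_eq, retTime_zero]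
      constructor
      · rintro ⟨m, h1, h2, h3⟩
        have h0 : (0:ℕ) < m := by exact_mod_cast h1
        exact ⟨m, h0, h2, h3⟩
      · rintro ⟨m, h1, h2, h3⟩
        have h0 : (0:ℝ≥0∞) < (m:ℝ≥0∞) := by exact_mod_cast (by omega : 0 < m)
        exact ⟨m, h0, h2, h3⟩
    rw [h]
    exact hδ
  have hFj : ∀ j, 1 ≤ j → c.P z (F j) = 0 := by
    intro j hj
    have hsub : F j ⊆ ⋃ n : ℕ, ({ω : ℕ → M | retTime z j ω = (n:ℝ≥0∞)} ∩
        shf n ⁻¹' blockHit z x) := by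
      intro ω hω
      obtain ⟨m, h1, h2, h3⟩ := hω
      have hfin : retTime z j ω ≠ ⊤ := by
        intro htop
        rw [htop] at h1
        exact absurd h1 (by simp)
      obtain ⟨n, hn⟩ | htop := retTime_cases z j ω
      swap
      · exact absurd htop hfin
      refine Set.mem_iUnion.mpr ⟨n, hn, ?_⟩
      have hnm : n < m := by
        rw [hn] at h1
        exact_mod_cast h1
      have hid := retTime_succ_shift hn
      rw [hid] at h2
      simp only [Set.mem_preimage, blockHit, Set.mem_setOf_eq]
      refine ⟨m - n, by omega, ?_, ?_⟩
      · have hmn2 : m = n + (m - n) := by omega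
        have hm : (m : ℝ≥0∞) = (n : ℝ≥0∞) + ((m - n : ℕ) : ℝ≥0∞) := by
          calc (m:ℝ≥0∞) = ((n + (m - n) : ℕ) : ℝ≥0∞) := by rw [← hmn2]
            _ = (n:ℝ≥0∞) + ((m - n : ℕ):ℝ≥0∞) := by push_cast; rfl
        rw [hm] at h2
        exact (ENNReal.add_le_add_iff_left (by simp : (n:ℝ≥0∞) ≠ ⊤)).mp h2
      · show ω (n + (m - n)) = x
        rw [show n + (m - n) = m from by omega]
        exact h3
    refine le_antisymm (le_trans (measure_mono hsub) ?_) (zero_le)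
    refine le_trans (measure_iUnion_le _) ?_
    refine le_of_eq (ENNReal.tsum_eq_zero.mpr fun n => ?_)
    rw [strong_markov_set hAll c (retE_isCyl z j n) (retE_endpoint z hj n)
      (blockHit_measurable hAll z x), hδ, mul_zero]
  -- all-returns-finite event
  set I := ⋂ j : ℕ, {ω : ℕ → M | retTime z j ω ≠ ⊤} with hI_def
  have hIc : c.P z Iᶜ = 0 := by
    rw [hI_def, Set.compl_iInter]
    refine le_antisymm (le_trans (measure_iUnion_le _) ?_) (zero_le)
    refine le_of_eq (ENNReal.tsum_eq_zero.mpr fun j => ?_)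
    have hc : {ω : ℕ → M | retTime z j ω ≠ ⊤}ᶜ = {ω | retTime z j ω = ⊤} := by
      ext ω; simp
    rw [hc]
    rcases Nat.eq_zero_or_pos j with rfl | hj
    · have he : {ω : ℕ → M | retTime z 0 ω = ⊤} = ∅ := by
        ext ω; simp [retTime_zero]
      rw [he, measure_empty]
    · exact (ret_fin_E hAll c hpos z j hj).1
  -- covering
  have hcov : {ω : ℕ → M | ∀ i, 1 ≤ i → ω i ≠ x}ᶜ ⊆ Iᶜ ∪ ⋃ j : ℕ, F j := by
    intro ω hω
    by_cases hI : ω ∈ I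
    · right
      simp only [Set.mem_compl_iff, Set.mem_setOf_eq, not_forall, not_not] at hω
      obtain ⟨i, h1, h2⟩ := hω
      classical
      set p : ℕ → Prop := fun j => retTime z j ω < (i : ℝ≥0∞) with hp_def
      have hp0 : p 0 := by
        show retTime z 0 ω < (i : ℝ≥0∞)
        rw [retTime_zero]
        exact_mod_cast (by omega : 0 < i)
      set j := Nat.findGreatest p i with hj_def
      have hpj : p j := Nat.findGreatest_spec (Nat.zero_le i) hp0
      have hnext : (i : ℝ≥0∞) ≤ retTime z (j + 1) ω := by
        by_cases hji : j + 1 ≤ i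
        · have hnp : ¬ p (j + 1) :=
            Nat.findGreatest_is_greatest (by omega) hji
          exact not_lt.mp hnp
        · calc (i:ℝ≥0∞) ≤ ((j + 1 : ℕ) : ℝ≥0∞) := by exact_mod_cast (by omega : i ≤ j + 1)
            _ ≤ retTime z (j + 1) ω := coe_le_retTime z (j + 1) ω
      exact Set.mem_iUnion.mpr ⟨j, i, hpj, hnext, h2⟩
    · exact Or.inl hI
  have : (1 : ℝ≥0∞) ≤ 0 := by
    calc (1:ℝ≥0∞) = c.P z {ω : ℕ → M | ∀ i, 1 ≤ i → ω i ≠ x}ᶜ := hev1.symm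
      _ ≤ c.P z (Iᶜ ∪ ⋃ j : ℕ, F j) := measure_mono hcov
      _ ≤ c.P z Iᶜ + c.P z (⋃ j : ℕ, F j) := measure_union_le _ _
      _ ≤ 0 + ∑' j : ℕ, c.P z (F j) := by
          gcongr
          · exact le_of_eq hIc
          · exact measure_iUnion_le _
      _ = 0 := by
          rw [zero_add]
          refine ENNReal.tsum_eq_zero.mpr fun j => ?_
          rcases Nat.eq_zero_or_pos j with rfl | hj
          · exact hF0
          · exact hFj j hj
  exact absurd this (by simp)

end HitFin


section HitFin2

set_option linter.unusedSectionVars false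

variable {M : Type*} [MeasurableSpace M] [Countable M]
variable (hAll : ∀ s : Set M, MeasurableSet s) (c : Chain M)

include hAll

omit hAll in
lemma tsum_shift (n : ℕ) (f : ℕ → ℝ≥0∞) :
    ∑' i : ℕ, (if n ≤ i then f (i - n) else 0) = ∑' d : ℕ, f d := by
  have hinj : Function.Injective (fun d : ℕ => n + d) := fun a b h =>
    Nat.add_left_cancel h
  have hoff : Function.support (fun i : ℕ => if n ≤ i then f (i - n) else 0)
      ⊆ Set.range (fun d : ℕ => n + d) := by
    intro i hi
    by_cases hni : n ≤ i
    · exact ⟨i - n, show n + (i - n) = i by omega⟩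
    · rw [Function.mem_support, if_neg hni] at hi
      exact absurd rfl hi
  have h := Function.Injective.tsum_eq hinj
    (f := fun i : ℕ => if n ≤ i then f (i - n) else 0) hoff
  rw [← h]
  refine tsum_congr fun d => ?_
  show (if n ≤ n + d then f (n + d - n) else 0) = f d
  rw [if_pos (by omega : n ≤ n + d)]
  congr 1
  omega

/-- no visit to `x` up to the `j`-th return time to `z` -/
def noHitW (z x : M) (j : ℕ) : Set (ℕ → M) :=
  {ω | ∀ m : ℕ, (m : ℝ≥0∞) ≤ retTime z j ω → ω m ≠ x}

lemma noHitW_measurable (z x : M) (j : ℕ) : MeasurableSet (noHitW z x j) := by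
  have h : noHitW z x j = ⋂ m : ℕ,
      ({ω : ℕ → M | (m : ℝ≥0∞) ≤ retTime z j ω} ∩ {ω | ω m = x})ᶜ := by
    ext ω
    simp only [noHitW, Set.mem_setOf_eq, Set.mem_iInter, Set.mem_compl_iff,
      Set.mem_inter_iff, not_and]
  rw [h]
  exact MeasurableSet.iInter fun m =>
    (((measurable_retTime hAll z j) measurableSet_Ici).inter
      (coord_eq_measurable hAll m x)).compl

omit hAll in
lemma noHitW_inter_cyl (z x : M) (j n : ℕ) :
    IsCylEvent n (noHitW z x j ∩ {ω | retTime z j ω = (n : ℝ≥0∞)}) := by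
  rintro ω ω' hpre ⟨h1, h2⟩
  have h2' : retTime z j ω' = (n : ℝ≥0∞) := retTime_cyl j hpre h2
  refine ⟨?_, h2'⟩
  intro m hm
  rw [h2'] at hm
  have hmn : m ≤ n := by exact_mod_cast hm
  rw [← hpre m hmn]
  refine h1 m ?_
  rw [h2]
  exact hm

omit hAll in
lemma noHitW_succ_iff (z x : M) {j n : ℕ} {ω : ℕ → M}
    (hn : retTime z j ω = (n : ℝ≥0∞)) :
    ω ∈ noHitW z x (j + 1) ↔ ω ∈ noHitW z x j ∧ shf n ω ∈ (blockHit z x)ᶜ := by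
  have hid := retTime_succ_shift hn
  constructor
  · intro hW
    constructor
    · intro m hm
      refine hW m ?_
      exact le_trans hm (retTime_le_succ z j ω)
    · intro hB
      obtain ⟨m', h1, h2, h3⟩ := hB
      refine hW (n + m') ?_ h3
      rw [hid]
      have : ((n + m' : ℕ) : ℝ≥0∞) = (n : ℝ≥0∞) + (m' : ℝ≥0∞) := by push_cast; rfl
      rw [this]
      exact add_le_add le_rfl h2
  · rintro ⟨hWj, hB⟩ m hm
    rw [hid] at hm
    by_cases hmn : m ≤ n
    · refine hWj m ?_
      rw [hn]
      exact_mod_cast hmn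
    · intro hx
      refine hB ⟨m - n, by omega, ?_, ?_⟩
      · have hm' : (m : ℝ≥0∞) = (n : ℝ≥0∞) + ((m - n : ℕ) : ℝ≥0∞) := by
          calc (m:ℝ≥0∞) = ((n + (m - n) : ℕ) : ℝ≥0∞) := by rw [(by omega : n + (m - n) = m)]
            _ = (n:ℝ≥0∞) + ((m - n : ℕ):ℝ≥0∞) := by push_cast; rfl
        rw [hm'] at hm
        exact (ENNReal.add_le_add_iff_left (by simp : (n:ℝ≥0∞) ≠ ⊤)).mp hm
      · show ω (n + (m - n)) = x
        rw [(by omega : n + (m - n) = m)]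
        exact hx

lemma noHitW_decay (hpos : PositiveRecurrent c) (z x : M) {j : ℕ} (hj : 1 ≤ j) :
    c.P z (noHitW z x (j + 1)) ≤ c.P z (blockHit z x)ᶜ * c.P z (noHitW z x j) := by
  have := c.prob z
  have hBc : MeasurableSet (blockHit z x)ᶜ := (blockHit_measurable hAll z x).compl
  have hsub : noHitW z x (j + 1) ⊆ {ω | retTime z j ω = ⊤} ∪
      ⋃ n : ℕ, ((noHitW z x j ∩ {ω | retTime z j ω = (n : ℝ≥0∞)}) ∩
        shf n ⁻¹' (blockHit z x)ᶜ) := by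
    intro ω hω
    rcases retTime_cases z j ω with ⟨n, hn⟩ | htop
    · right
      refine Set.mem_iUnion.mpr ⟨n, ?_⟩
      obtain ⟨h1, h2⟩ := (noHitW_succ_iff z x hn).mp hω
      exact ⟨⟨h1, hn⟩, h2⟩
    · exact Or.inl htop
  calc c.P z (noHitW z x (j + 1))
      ≤ c.P z {ω | retTime z j ω = ⊤} +
        ∑' n : ℕ, c.P z ((noHitW z x j ∩ {ω | retTime z j ω = (n : ℝ≥0∞)}) ∩
          shf n ⁻¹' (blockHit z x)ᶜ) := by
        refine le_trans (measure_mono hsub) (le_trans (measure_union_le _ _) ?_)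
        gcongr
        exact measure_iUnion_le _
    _ = ∑' n : ℕ, c.P z (noHitW z x j ∩ {ω | retTime z j ω = (n : ℝ≥0∞)}) *
          c.P z (blockHit z x)ᶜ := by
        rw [(ret_fin_E hAll c hpos z j hj).1, zero_add]
        refine tsum_congr fun n => ?_
        refine strong_markov_set hAll c (noHitW_inter_cyl z x j n) ?_ hBc
        intro ω hω
        exact retE_endpoint z hj n ω hω.2
    _ = (∑' n : ℕ, c.P z (noHitW z x j ∩ {ω | retTime z j ω = (n : ℝ≥0∞)})) *
          c.P z (blockHit z x)ᶜ := ENNReal.tsum_mul_right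
    _ ≤ c.P z (noHitW z x j) * c.P z (blockHit z x)ᶜ := by
        gcongr
        have hdis : Pairwise (Function.onFun Disjoint fun n : ℕ =>
            noHitW z x j ∩ {ω | retTime z j ω = (n : ℝ≥0∞)}) := by
          intro n m hnm
          exact Disjoint.mono (Set.inter_subset_right) (Set.inter_subset_right)
            (retE_disjoint z j hnm)
        have hms : ∀ n : ℕ, MeasurableSet
            (noHitW z x j ∩ {ω | retTime z j ω = (n : ℝ≥0∞)}) := fun n =>
          (noHitW_measurable hAll z x j).inter (retE_measurable hAll z j n)
        rw [← measure_iUnion hdis hms]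
        exact measure_mono (Set.iUnion_subset fun n => Set.inter_subset_left)
    _ = c.P z (blockHit z x)ᶜ * c.P z (noHitW z x j) := mul_comm _ _

lemma noHitW_geom (hpos : PositiveRecurrent c) (z x : M) :
    ∀ j : ℕ, 1 ≤ j → c.P z (noHitW z x j) ≤ (c.P z (blockHit z x)ᶜ) ^ j := by
  have := c.prob z
  intro j hj
  induction j with
  | zero => omega
  | succ j ih =>
    rcases Nat.eq_zero_or_pos j with rfl | hj1
    · have hsub : noHitW z x 1 ⊆ (blockHit z x)ᶜ := by
        intro ω hω hB
        obtain ⟨m, h1, h2, h3⟩ := hB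
        exact hω m h2 h3
      calc c.P z (noHitW z x 1) ≤ c.P z (blockHit z x)ᶜ := measure_mono hsub
        _ = (c.P z (blockHit z x)ᶜ) ^ 1 := (pow_one _).symm
    · calc c.P z (noHitW z x (j + 1))
          ≤ c.P z (blockHit z x)ᶜ * c.P z (noHitW z x j) :=
            noHitW_decay hAll c hpos z x hj1
        _ ≤ c.P z (blockHit z x)ᶜ * (c.P z (blockHit z x)ᶜ) ^ j := by gcongr; exact ih hj1
        _ = (c.P z (blockHit z x)ᶜ) ^ (j + 1) := (pow_succ' _ _).symm

end HitFin2


section HitFin3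

set_option linter.unusedSectionVars false

variable {M : Type*} [MeasurableSpace M] [Countable M]
variable (hAll : ∀ s : Set M, MeasurableSet s) (c : Chain M)

include hAll

omit hAll in
lemma hitTime_zero_start (z : M) {ω : ℕ → M} (h : ω 0 = z) : hitTime {z} ω = 0 := by
  rw [hitTime_eq_nInf]
  refine le_antisymm ?_ (zero_le)
  have h2 := nInf_le (p := fun n => ω n = z) h
  simpa using h2

lemma eHit_lt_top (hpos : PositiveRecurrent c) (hirr : Irreducible c) (z x : M) :
    E c z (hitTime {x}) < ⊤ := by
  classical
  have hPz := c.prob z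
  by_cases hx : x = z
  · subst hx
    have hmz : MeasurableSet {ω : ℕ → M | ω 0 = x} := coord_eq_measurable hAll 0 x
    have h0 : E c x (hitTime {x}) = 0 := by
      rw [E, ← lintegral_add_compl _ hmz]
      have h1 : ∫⁻ ω in {ω : ℕ → M | ω 0 = x}, hitTime {x} ω ∂(c.P x) = 0 := by
        have hcongr : ∫⁻ ω in {ω : ℕ → M | ω 0 = x}, hitTime {x} ω ∂(c.P x)
            = ∫⁻ _ in {ω : ℕ → M | ω 0 = x}, (0 : ℝ≥0∞) ∂(c.P x) := by
          refine setLIntegral_congr_fun hmz ?_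
          exact fun ω hω => hitTime_zero_start x hω
        rw [hcongr]
        simp
      have h2 : c.P x {ω : ℕ → M | ω 0 = x}ᶜ = 0 := by
        have := c.prob x
        rw [measure_compl hmz (measure_ne_top _ _), c.start x, measure_univ, tsub_self]
      rw [h1, setLIntegral_measure_zero _ _ h2, add_zero]
    rw [h0]
    exact zero_lt_top
  · set δ := c.P z (blockHit z x) with hδ_def
    have hδpos : 0 < δ := blockHit_pos hAll c hpos hirr z x
    set η := c.P z (blockHit z x)ᶜ with hη_def
    have hδη : 1 - η = δ := by
      rw [hη_def, measure_compl (blockHit_measurable hAll z x) (measure_ne_top _ _),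
        measure_univ, hδ_def]
      exact ENNReal.sub_sub_cancel one_ne_top prob_le_one
    set E1 := E c z (retTime z 1) with hE1_def
    have hE1lt : E1 < ⊤ := hpos z
    have hlc : E c z (hitTime {x}) = ∑' i : ℕ, c.P z {ω | (i:ℝ≥0∞) < hitTime {x} ω} :=
      lintegral_tsum_gt (c.P z) (measurable_hitTime hAll x) (hitTime_cases x)
    have hlc1 : E1 = ∑' i : ℕ, c.P z {ω | (i:ℝ≥0∞) < retTime z 1 ω} :=
      lintegral_tsum_gt (c.P z) (measurable_retTime hAll z 1) (retTime_cases z 1)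
    -- the block sets
    set G : ℕ → ℕ → Set (ℕ → M) := fun j i =>
      {ω | retTime z j ω ≤ (i:ℝ≥0∞) ∧ (i:ℝ≥0∞) < retTime z (j+1) ω} with hG_def
    -- covering per i
    have hcov : ∀ i : ℕ, c.P z {ω | (i:ℝ≥0∞) < hitTime {x} ω} ≤
        ∑' j : ℕ, c.P z (noHitW z x j ∩ G j i) := by
      intro i
      refine le_trans (measure_mono ?_) (measure_iUnion_le _)
      intro ω hω
      set p : ℕ → Prop := fun j => retTime z j ω ≤ (i:ℝ≥0∞) with hp_def
      have hp0 : p 0 := by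
        show retTime z 0 ω ≤ _
        rw [retTime_zero]
        exact zero_le
      set j := Nat.findGreatest p i with hj_def
      have hpj : p j := Nat.findGreatest_spec (Nat.zero_le i) hp0
      have hnext : (i:ℝ≥0∞) < retTime z (j+1) ω := by
        by_cases hji : j + 1 ≤ i
        · have hnp : ¬ p (j + 1) := Nat.findGreatest_is_greatest (by omega) hji
          exact not_le.mp hnp
        · have hlt : (i:ℝ≥0∞) < ((j+1:ℕ):ℝ≥0∞) := by exact_mod_cast (by omega : i < j + 1)
          exact lt_of_lt_of_le hlt (coe_le_retTime z (j+1) ω)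
      refine Set.mem_iUnion.mpr ⟨j, ⟨?_, hpj, hnext⟩⟩
      intro m hm
      have hmi : m ≤ i := by exact_mod_cast le_trans hm hpj
      exact coe_lt_hitTime_iff.mp hω m hmi
    -- per-j bound
    have hterm : ∀ j : ℕ, (∑' i : ℕ, c.P z (noHitW z x j ∩ G j i)) ≤ η ^ j * E1 := by
      intro j
      rcases Nat.eq_zero_or_pos j with rfl | hj1
      · have hsub : ∀ i : ℕ, noHitW z x 0 ∩ G 0 i ⊆ {ω | (i:ℝ≥0∞) < retTime z 1 ω} :=
          fun i ω hω => hω.2.2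
        calc ∑' i : ℕ, c.P z (noHitW z x 0 ∩ G 0 i)
            ≤ ∑' i : ℕ, c.P z {ω | (i:ℝ≥0∞) < retTime z 1 ω} :=
              ENNReal.tsum_le_tsum fun i => measure_mono (hsub i)
          _ = E1 := hlc1.symm
          _ = η ^ 0 * E1 := by rw [pow_zero, one_mul]
      · -- j ≥ 1
        have hper : ∀ i n : ℕ, c.P z (noHitW z x j ∩ G j i ∩ {ω | retTime z j ω = (n:ℝ≥0∞)})
            ≤ (if n ≤ i then c.P z (noHitW z x j ∩ {ω | retTime z j ω = (n:ℝ≥0∞)}) *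
                c.P z {ω | ((i - n : ℕ):ℝ≥0∞) < retTime z 1 ω} else 0) := by
          intro i n
          by_cases hni : n ≤ i
          · rw [if_pos hni]
            have hsub : noHitW z x j ∩ G j i ∩ {ω | retTime z j ω = (n:ℝ≥0∞)} ⊆
                (noHitW z x j ∩ {ω | retTime z j ω = (n:ℝ≥0∞)}) ∩
                  shf n ⁻¹' {ω | ((i - n : ℕ):ℝ≥0∞) < retTime z 1 ω} := by
              rintro ω ⟨⟨hW, hG1, hG2⟩, hn⟩
              refine ⟨⟨hW, hn⟩, ?_⟩
              have hid := retTime_succ_shift hn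
              rw [hid] at hG2
              show ((i - n : ℕ):ℝ≥0∞) < retTime z 1 (shf n ω)
              have hi' : (i:ℝ≥0∞) = (n:ℝ≥0∞) + ((i - n : ℕ):ℝ≥0∞) := by
                calc (i:ℝ≥0∞) = ((n + (i - n) : ℕ):ℝ≥0∞) := by
                      rw [(by omega : n + (i - n) = i)]
                  _ = (n:ℝ≥0∞) + ((i - n : ℕ):ℝ≥0∞) := by push_cast; rfl
              rw [hi'] at hG2
              exact (ENNReal.add_lt_add_iff_left (by simp : (n:ℝ≥0∞) ≠ ⊤)).mp hG2
            refine le_trans (measure_mono hsub) ?_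
            refine le_of_eq (strong_markov_set hAll c (noHitW_inter_cyl z x j n)
              (fun ω hω => retE_endpoint z hj1 n ω hω.2)
              (show MeasurableSet {ω : ℕ → M | ((i - n : ℕ):ℝ≥0∞) < retTime z 1 ω} from
                (measurable_retTime hAll z 1) measurableSet_Ioi))
          · rw [if_neg hni]
            have hempty : noHitW z x j ∩ G j i ∩ {ω | retTime z j ω = (n:ℝ≥0∞)} = ∅ := by
              ext ω
              simp only [Set.mem_inter_iff, Set.mem_setOf_eq, Set.mem_empty_iff_false,
                iff_false, not_and]
              rintro ⟨hW, hG1, hG2⟩ hn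
              rw [hn] at hG1
              exact hni (by exact_mod_cast hG1)
            rw [hempty, measure_empty]
        have hcov2 : ∀ i : ℕ, c.P z (noHitW z x j ∩ G j i) ≤
            ∑' n : ℕ, c.P z (noHitW z x j ∩ G j i ∩ {ω | retTime z j ω = (n:ℝ≥0∞)}) := by
          intro i
          refine le_trans (measure_mono ?_) (measure_iUnion_le _)
          rintro ω ⟨hW, hG1, hG2⟩
          rcases retTime_cases z j ω with ⟨n, hn⟩ | htop
          · exact Set.mem_iUnion.mpr ⟨n, ⟨hW, hG1, hG2⟩, hn⟩
          · rw [htop] at hG1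
            exact absurd hG1 (by simp)
        calc ∑' i : ℕ, c.P z (noHitW z x j ∩ G j i)
            ≤ ∑' i : ℕ, ∑' n : ℕ,
              (if n ≤ i then c.P z (noHitW z x j ∩ {ω | retTime z j ω = (n:ℝ≥0∞)}) *
                c.P z {ω | ((i - n : ℕ):ℝ≥0∞) < retTime z 1 ω} else 0) := by
              refine ENNReal.tsum_le_tsum fun i => ?_
              refine le_trans (hcov2 i) (ENNReal.tsum_le_tsum fun n => hper i n)
          _ = ∑' n : ℕ, ∑' i : ℕ,
              (if n ≤ i then c.P z (noHitW z x j ∩ {ω | retTime z j ω = (n:ℝ≥0∞)}) *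
                c.P z {ω | ((i - n : ℕ):ℝ≥0∞) < retTime z 1 ω} else 0) := ENNReal.tsum_comm
          _ = ∑' n : ℕ, c.P z (noHitW z x j ∩ {ω | retTime z j ω = (n:ℝ≥0∞)}) * E1 := by
              refine tsum_congr fun n => ?_
              have h1 : ∀ i : ℕ,
                  (if n ≤ i then c.P z (noHitW z x j ∩ {ω | retTime z j ω = (n:ℝ≥0∞)}) *
                    c.P z {ω | ((i - n : ℕ):ℝ≥0∞) < retTime z 1 ω} else 0)
                  = c.P z (noHitW z x j ∩ {ω | retTime z j ω = (n:ℝ≥0∞)}) *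
                    (if n ≤ i then c.P z {ω | ((i - n : ℕ):ℝ≥0∞) < retTime z 1 ω} else 0) := by
                intro i
                by_cases hni : n ≤ i
                · rw [if_pos hni, if_pos hni]
                · rw [if_neg hni, if_neg hni, mul_zero]
              rw [tsum_congr h1, ENNReal.tsum_mul_left]
              congr 1
              rw [tsum_shift n (fun d => c.P z {ω | (d:ℝ≥0∞) < retTime z 1 ω})]
              exact hlc1.symm
          _ = (∑' n : ℕ, c.P z (noHitW z x j ∩ {ω | retTime z j ω = (n:ℝ≥0∞)})) * E1 :=
              ENNReal.tsum_mul_right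
          _ ≤ c.P z (noHitW z x j) * E1 := by
              gcongr
              have hdis : Pairwise (Function.onFun Disjoint fun n : ℕ =>
                  noHitW z x j ∩ {ω | retTime z j ω = (n : ℝ≥0∞)}) := by
                intro n m hnm
                exact Disjoint.mono (Set.inter_subset_right) (Set.inter_subset_right)
                  (retE_disjoint z j hnm)
              have hms : ∀ n : ℕ, MeasurableSet
                  (noHitW z x j ∩ {ω | retTime z j ω = (n : ℝ≥0∞)}) := fun n =>
                (noHitW_measurable hAll z x j).inter (retE_measurable hAll z j n)
              rw [← measure_iUnion hdis hms]
              exact measure_mono (Set.iUnion_subset fun n => Set.inter_subset_left)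
          _ ≤ η ^ j * E1 := by
              gcongr
              exact noHitW_geom hAll c hpos z x j hj1
    -- conclude
    calc E c z (hitTime {x})
        ≤ ∑' j : ℕ, η ^ j * E1 := by
          rw [hlc]
          refine le_trans (ENNReal.tsum_le_tsum hcov) ?_
          rw [ENNReal.tsum_comm]
          exact ENNReal.tsum_le_tsum hterm
      _ = (∑' j : ℕ, η ^ j) * E1 := ENNReal.tsum_mul_right
      _ = (1 - η)⁻¹ * E1 := by rw [ENNReal.tsum_geometric]
      _ = δ⁻¹ * E1 := by rw [hδη]
      _ < ⊤ := ENNReal.mul_lt_top (ENNReal.inv_lt_top.mpr hδpos) hE1lt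

end HitFin3


section Final

set_option linter.unusedSectionVars false

variable {M : Type*} [MeasurableSpace M] [Countable M]
variable (hAll : ∀ s : Set M, MeasurableSet s) (c : Chain M)

include hAll

/-- general fiber decomposition (arbitrary measure) -/
lemma lintegral_fiber_gen (z : M) (k : ℕ) (μ : Measure (ℕ → M))
    (hfin : μ {ω | retTime z k ω = ⊤} = 0) (g : (ℕ → M) → ℝ≥0∞) :
    ∫⁻ ω, g ω ∂μ = ∑' n : ℕ, ∫⁻ ω in {ω | retTime z k ω = (n : ℝ≥0∞)}, g ω ∂μ := by
  set U := ⋃ n : ℕ, {ω : ℕ → M | retTime z k ω = (n : ℝ≥0∞)} with hU_def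
  have hUmeas : MeasurableSet U :=
    MeasurableSet.iUnion fun n => retE_measurable hAll z k n
  have hUc : μ Uᶜ = 0 := by
    rw [hU_def, compl_retE]
    exact hfin
  calc ∫⁻ ω, g ω ∂μ
      = ∫⁻ ω in U, g ω ∂μ + ∫⁻ ω in Uᶜ, g ω ∂μ := (lintegral_add_compl g hUmeas).symm
    _ = ∫⁻ ω in U, g ω ∂μ := by rw [setLIntegral_measure_zero _ _ hUc, add_zero]
    _ = ∑' n : ℕ, ∫⁻ ω in {ω | retTime z k ω = (n : ℝ≥0∞)}, g ω ∂μ :=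
        lintegral_iUnion (fun n => retE_measurable hAll z k n) (retE_disjoint z k) g

omit hAll in
lemma coverTime_shift_le (A : Set M) (ω : ℕ → M) (n : ℕ) :
    coverTime A ω ≤ (n : ℝ≥0∞) + coverTime A (shf n ω) := by
  refine iSup₂_le fun x hx => ?_
  refine le_trans (hitTime_shift_le x ω n) ?_
  refine add_le_add le_rfl ?_
  exact le_iSup₂ (f := fun x (_ : x ∈ A) => hitTime {x} (shf n ω)) x hx

omit hAll in
lemma coe_lt_coverTime_iff {A : Set M} {ω : ℕ → M} {n : ℕ} :
    (n : ℝ≥0∞) < coverTime A ω ↔ ∃ x ∈ A, ∀ m ≤ n, ω m ≠ x := by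
  rw [coverTime, lt_iSup_iff]
  constructor
  · rintro ⟨x, hx⟩
    rw [lt_iSup_iff] at hx
    obtain ⟨hxa, hlt⟩ := hx
    exact ⟨x, hxa, coe_lt_hitTime_iff.mp hlt⟩
  · rintro ⟨x, hxa, h⟩
    refine ⟨x, ?_⟩
    rw [lt_iSup_iff]
    exact ⟨hxa, coe_lt_hitTime_iff.mpr h⟩

/-- the restart inequality: `P(cov ≤ T^k) ⬝ E cov ≤ E T^k` -/
lemma restart_ineq (hpos : PositiveRecurrent c) (hirr : Irreducible c)
    {A : Set M} (hA : A.Finite) {z : M} (hz : z ∈ A) {k : ℕ} (hk : 1 ≤ k) :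
    c.P z {ω | coverTime A ω ≤ retTime z k ω} * E c z (coverTime A)
      ≤ E c z (retTime z k) := by
  classical
  have hPz := c.prob z
  set C := E c z (coverTime A) with hC_def
  set R := E c z (retTime z k) with hR_def
  set G : Set (ℕ → M) := {ω | coverTime A ω ≤ retTime z k ω} with hG_def
  have hGmeas : MeasurableSet G :=
    measurableSet_le (measurable_coverTime hAll A) (measurable_retTime hAll z k)
  set p := c.P z G with hp_def
  set q := c.P z Gᶜ with hq_def
  have hfin : c.P z {ω | retTime z k ω = ⊤} = 0 := (ret_fin_E hAll c hpos z k hk).1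
  -- C < ⊤
  have hCfin : C < ⊤ := by
    have hpt : ∀ ω : ℕ → M, coverTime A ω ≤ ∑ x ∈ hA.toFinset, hitTime {x} ω := by
      intro ω
      refine iSup₂_le fun x hx => ?_
      exact Finset.single_le_sum (f := fun x => hitTime {x} ω)
        (fun y _ => zero_le) (hA.mem_toFinset.mpr hx)
    calc C ≤ ∫⁻ ω, ∑ x ∈ hA.toFinset, hitTime {x} ω ∂(c.P z) := lintegral_mono hpt
      _ = ∑ x ∈ hA.toFinset, E c z (hitTime {x}) := by
          rw [lintegral_finset_sum _ (fun x _ => measurable_hitTime hAll x)]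
          rfl
      _ < ⊤ := ENNReal.sum_lt_top.mpr fun x _ => eHit_lt_top hAll c hpos hirr z x
  -- the cylindrical pieces of Gᶜ
  have hBcyl : ∀ n : ℕ, IsCylEvent n (Gᶜ ∩ {ω | retTime z k ω = (n : ℝ≥0∞)}) := by
    intro n ω ω' hpre hω
    obtain ⟨h1, h2⟩ := hω
    have h2' : retTime z k ω' = (n : ℝ≥0∞) := retTime_cyl k hpre h2
    refine ⟨?_, h2'⟩
    have hlt : (n : ℝ≥0∞) < coverTime A ω := by
      have h1' : ¬ coverTime A ω ≤ retTime z k ω := h1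
      rw [h2] at h1'
      exact not_le.mp h1'
    obtain ⟨x, hxa, hne⟩ := coe_lt_coverTime_iff.mp hlt
    have hlt' : (n : ℝ≥0∞) < coverTime A ω' := by
      refine coe_lt_coverTime_iff.mpr ⟨x, hxa, fun m hm => ?_⟩
      rw [← hpre m hm]
      exact hne m hm
    show ¬ coverTime A ω' ≤ retTime z k ω'
    rw [h2']
    exact not_le.mpr hlt'
  -- decomposition of ∫_{Gᶜ} cover
  have hmain : C ≤ R + q * C := by
    have hsplit : C = ∫⁻ ω in G, coverTime A ω ∂(c.P z) +
        ∫⁻ ω in Gᶜ, coverTime A ω ∂(c.P z) := (lintegral_add_compl _ hGmeas).symm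
    have hRsplit : R = ∫⁻ ω in G, retTime z k ω ∂(c.P z) +
        ∫⁻ ω in Gᶜ, retTime z k ω ∂(c.P z) := (lintegral_add_compl _ hGmeas).symm
    have hG1 : ∫⁻ ω in G, coverTime A ω ∂(c.P z) ≤ ∫⁻ ω in G, retTime z k ω ∂(c.P z) :=
      setLIntegral_mono (measurable_retTime hAll z k) (fun ω hω => hω)
    -- fibers for the restricted measure
    have hfin' : (c.P z).restrict Gᶜ {ω | retTime z k ω = ⊤} = 0 := by
      rw [Measure.restrict_apply (retE_top_measurable hAll z k)]
      exact le_antisymm (le_trans (measure_mono Set.inter_subset_left) (le_of_eq hfin))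
        (zero_le)
    have hdec : ∫⁻ ω in Gᶜ, coverTime A ω ∂(c.P z)
        = ∑' n : ℕ, ∫⁻ ω in Gᶜ ∩ {ω | retTime z k ω = (n : ℝ≥0∞)},
            coverTime A ω ∂(c.P z) := by
      rw [show ∫⁻ ω in Gᶜ, coverTime A ω ∂(c.P z)
          = ∫⁻ ω, coverTime A ω ∂((c.P z).restrict Gᶜ) from rfl,
        lintegral_fiber_gen hAll z k _ hfin']
      refine tsum_congr fun n => ?_
      rw [Measure.restrict_restrict (retE_measurable hAll z k n), Set.inter_comm]
    have hdecR : ∫⁻ ω in Gᶜ, retTime z k ω ∂(c.P z)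
        = ∑' n : ℕ, ∫⁻ ω in Gᶜ ∩ {ω | retTime z k ω = (n : ℝ≥0∞)},
            retTime z k ω ∂(c.P z) := by
      rw [show ∫⁻ ω in Gᶜ, retTime z k ω ∂(c.P z)
          = ∫⁻ ω, retTime z k ω ∂((c.P z).restrict Gᶜ) from rfl,
        lintegral_fiber_gen hAll z k _ hfin']
      refine tsum_congr fun n => ?_
      rw [Measure.restrict_restrict (retE_measurable hAll z k n), Set.inter_comm]
    have hterm : ∀ n : ℕ, ∫⁻ ω in Gᶜ ∩ {ω | retTime z k ω = (n : ℝ≥0∞)},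
        coverTime A ω ∂(c.P z)
          ≤ ∫⁻ ω in Gᶜ ∩ {ω | retTime z k ω = (n : ℝ≥0∞)}, retTime z k ω ∂(c.P z) +
            c.P z (Gᶜ ∩ {ω | retTime z k ω = (n : ℝ≥0∞)}) * C := by
      intro n
      set B := Gᶜ ∩ {ω : ℕ → M | retTime z k ω = (n : ℝ≥0∞)} with hB_def
      have hBmeas : MeasurableSet B := hGmeas.compl.inter (retE_measurable hAll z k n)
      have hstep1 : ∫⁻ ω in B, coverTime A ω ∂(c.P z)
          ≤ ∫⁻ ω in B, ((n : ℝ≥0∞) + coverTime A (shf n ω)) ∂(c.P z) :=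
        setLIntegral_mono (by
          exact measurable_const.add ((measurable_coverTime hAll A).comp (measurable_shf n)))
          (fun ω _ => coverTime_shift_le A ω n)
      have hstep2 : ∫⁻ ω in B, ((n : ℝ≥0∞) + coverTime A (shf n ω)) ∂(c.P z)
          = (n : ℝ≥0∞) * c.P z B + c.P z B * C := by
        rw [lintegral_add_left measurable_const, setLIntegral_const]
        congr 1
        exact strong_markov_lintegral hAll c (hBcyl n)
          (fun ω hω => retE_endpoint z hk n ω hω.2) (measurable_coverTime hAll A)
      have hstep3 : ∫⁻ ω in B, retTime z k ω ∂(c.P z) = (n : ℝ≥0∞) * c.P z B := by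
        have hcongr : ∫⁻ ω in B, retTime z k ω ∂(c.P z)
            = ∫⁻ _ in B, (n : ℝ≥0∞) ∂(c.P z) := by
          refine setLIntegral_congr_fun hBmeas ?_
          exact fun ω hω => hω.2
        rw [hcongr, setLIntegral_const]
      rw [hstep3]
      exact le_trans hstep1 (le_of_eq hstep2)
    have hqsum : ∑' n : ℕ, c.P z (Gᶜ ∩ {ω | retTime z k ω = (n : ℝ≥0∞)}) = q := by
      have hdis : Pairwise (Function.onFun Disjoint fun n : ℕ =>
          Gᶜ ∩ {ω | retTime z k ω = (n : ℝ≥0∞)}) := by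
        intro n m hnm
        exact Disjoint.mono (Set.inter_subset_right) (Set.inter_subset_right)
          (retE_disjoint z k hnm)
      have hms : ∀ n : ℕ, MeasurableSet (Gᶜ ∩ {ω | retTime z k ω = (n : ℝ≥0∞)}) :=
        fun n => hGmeas.compl.inter (retE_measurable hAll z k n)
      rw [← measure_iUnion hdis hms]
      have hU : Gᶜ ∩ (⋃ n : ℕ, {ω : ℕ → M | retTime z k ω = (n : ℝ≥0∞)}) =
          ⋃ n : ℕ, (Gᶜ ∩ {ω | retTime z k ω = (n : ℝ≥0∞)}) := by
        rw [Set.inter_iUnion]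
      rw [← hU, hq_def]
      have h1 : c.P z Gᶜ = c.P z (Gᶜ ∩ (⋃ n : ℕ, {ω : ℕ → M | retTime z k ω = (n:ℝ≥0∞)}))
          + c.P z (Gᶜ \ (⋃ n : ℕ, {ω : ℕ → M | retTime z k ω = (n:ℝ≥0∞)})) :=
        (measure_inter_add_diff _ (MeasurableSet.iUnion fun n =>
          retE_measurable hAll z k n)).symm
      have h2 : c.P z (Gᶜ \ (⋃ n : ℕ, {ω : ℕ → M | retTime z k ω = (n:ℝ≥0∞)})) = 0 := by
        refine le_antisymm (le_trans (measure_mono ?_) (le_of_eq hfin)) (zero_le)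
        intro ω hω
        have := hω.2
        rw [← compl_retE z k]
        exact this
      rw [h1, h2, add_zero]
    calc C = ∫⁻ ω in G, coverTime A ω ∂(c.P z) +
          ∫⁻ ω in Gᶜ, coverTime A ω ∂(c.P z) := hsplit
      _ ≤ ∫⁻ ω in G, retTime z k ω ∂(c.P z) +
          (∑' n : ℕ, (∫⁻ ω in Gᶜ ∩ {ω | retTime z k ω = (n : ℝ≥0∞)},
            retTime z k ω ∂(c.P z) +
            c.P z (Gᶜ ∩ {ω | retTime z k ω = (n : ℝ≥0∞)}) * C)) := by
          refine add_le_add hG1 ?_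
          rw [hdec]
          exact ENNReal.tsum_le_tsum hterm
      _ = ∫⁻ ω in G, retTime z k ω ∂(c.P z) +
          (∫⁻ ω in Gᶜ, retTime z k ω ∂(c.P z) + q * C) := by
          rw [ENNReal.tsum_add, ← hdecR, ENNReal.tsum_mul_right, hqsum]
      _ = R + q * C := by rw [hRsplit, add_assoc]
  -- cancel
  have hpq : p + q = 1 := by
    rw [hp_def, hq_def]
    have := measure_add_measure_compl (μ := c.P z) hGmeas
    rw [this, measure_univ]
  have hC_eq : p * C + q * C = C := by
    rw [← add_mul, hpq, one_mul]
  have hqC : q * C ≠ ⊤ := ENNReal.mul_ne_top (measure_ne_top _ _) hCfin.ne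
  have h2 : p * C + q * C ≤ R + q * C := by
    rw [hC_eq]
    exact hmain
  exact (ENNReal.add_le_add_iff_right hqC).mp h2

end Final


/-- Barlow–Ding–Nachmias–Peres lemma. For a finite `A ⊆ M`, `z ∈ A` and
`k ≥ 1`, `E_z T_cov(A) ≤ E_z T^k(z) / P_z(T_cov(A) ≤ T^k(z))
= k / (π(z) P_z(T_cov(A) ≤ T^k(z)))`. -/
theorem bdnp_lemma {M : Type*} [Countable M] [MeasurableSpace M]
    (c : Chain M) (hirr : Irreducible c) (hpos : PositiveRecurrent c)
    (π : M → ℝ≥0∞) (hπ : Invariant c π)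
    {A : Set M} (hA : A.Finite) {z : M} (hz : z ∈ A) {k : ℕ} (hk : 1 ≤ k) :
    E c z (coverTime A)
        ≤ E c z (retTime z k) / c.P z {ω | coverTime A ω ≤ retTime z k ω} ∧
    E c z (retTime z k) / c.P z {ω | coverTime A ω ≤ retTime z k ω}
        = (k : ℝ≥0∞) / (π z * c.P z {ω | coverTime A ω ≤ retTime z k ω}) := by
  have hAll : ∀ s : Set M, MeasurableSet s := allMeasurableSet c hpos
  have hPz := c.prob z
  set C := E c z (coverTime A) with hC_def
  set R := E c z (retTime z k) with hR_def
  set p := c.P z {ω | coverTime A ω ≤ retTime z k ω} with hp_def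
  have hp_top : p ≠ ⊤ := measure_ne_top _ _
  have hR1 : (1 : ℝ≥0∞) ≤ R := by
    rw [hR_def]
    calc (1 : ℝ≥0∞) = ∫⁻ _, 1 ∂(c.P z) := by rw [lintegral_one, measure_univ]
      _ ≤ ∫⁻ ω, retTime z k ω ∂(c.P z) :=
          lintegral_mono fun ω => one_le_retTime z hk ω
  have hRne : R ≠ 0 := by
    intro h
    rw [h] at hR1
    exact absurd hR1 (by simp)
  constructor
  · by_cases hp : p = 0
    · rw [hp, ENNReal.div_zero hRne]
      exact le_top
    · have hri := restart_ineq hAll c hpos hirr hA hz hk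
      rw [ENNReal.le_div_iff_mul_le (Or.inl hp) (Or.inl hp_top)]
      rw [mul_comm]
      exact hri
  · have hkac := kac hAll c hpos hirr hπ z
    have hE1ne : E c z (retTime z 1) ≠ 0 := by
      intro h
      have h1 : (1 : ℝ≥0∞) ≤ E c z (retTime z 1) := by
        calc (1 : ℝ≥0∞) = ∫⁻ _, 1 ∂(c.P z) := by rw [lintegral_one, measure_univ]
          _ ≤ ∫⁻ ω, retTime z 1 ω ∂(c.P z) :=
              lintegral_mono fun ω => one_le_retTime z le_rfl ω
      rw [h] at h1
      exact absurd h1 (by simp)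
    have hπ0 : π z ≠ 0 := by
      intro h
      rw [h, zero_mul] at hkac
      exact zero_ne_one hkac
    have hπtop : π z ≠ ⊤ := by
      have hle : π z ≤ 1 := by
        rw [← hπ.1]
        exact ENNReal.le_tsum z
      exact ne_top_of_le_ne_top one_ne_top hle
    have hE1 : E c z (retTime z 1) = (π z)⁻¹ := by
      have h2 := congrArg (fun t => (π z)⁻¹ * t) hkac
      rw [← mul_assoc, ENNReal.inv_mul_cancel hπ0 hπtop, one_mul, mul_one] at h2
      exact h2
    have hRk : R = (k : ℝ≥0∞) * (π z)⁻¹ := by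
      rw [hR_def, (ret_fin_E hAll c hpos z k hk).2, hE1]
    rw [hRk, div_eq_mul_inv, div_eq_mul_inv,
      ENNReal.mul_inv (Or.inl hπ0) (Or.inl hπtop), mul_assoc]

end

end CoverTime
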